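/- arXiv:1408.3370 — 4 statements merged into one kernel-verified Lean document; each statement's English description precedes it below -/
import Mathlib

section
/- For subsets J ⊆ J' ⊆ Δ and any w ∈ W^{J'}, the set-theoretic difference Φ_J(w) \ Φ_{J'}(w) is contained in the set of negative roots Φ⁻. -/
/-! Common framework: a reduced (crystallographic) root system `Φ` in a real vector
space `V`, with Weyl group `W` (generated by the reflections `s_α`, `α ∈ Φ`, inside the
group of linear automorphisms of `V`), a base `Δ` of simple roots with positive system
`Pos = Φ⁺`, and the associated combinatorics. -/

open scoped Classical Pointwise

namespace PaperSp

variable {V : Type} [AddCommGroup V] [Module ℝ V]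

/-- The data of a reduced crystallographic root system in `V`:  a finite spanning set
`Phi` of nonzero vectors together with, for each root `α`, a linear functional
`pairing α = ⟨·, α∨⟩` taking the value `2` at `α`, such that the associated reflections
`s_α : β ↦ β − ⟨β, α∨⟩α` preserve `Phi`, all pairings are integral, and the only
multiples of a root `α` which are roots are `±α`. -/
structure RootSystemData (V : Type) [AddCommGroup V] [Module ℝ V] : Type where
  Phi : Set V
  pairing : V → V →ₗ[ℝ] ℝ
  pairing_self : ∀ α, α ∈ Phi → pairing α α = 2
  finite : Phi.Finite
  span_top : Submodule.span ℝ Phi = ⊤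
  zero_not_mem : (0 : V) ∉ Phi
  crystallographic : ∀ α ∈ Phi, ∀ β ∈ Phi, ∃ n : ℤ, pairing α β = (n : ℝ)
  reduced : ∀ α ∈ Phi, ∀ t : ℝ, t • α ∈ Phi → t = 1 ∨ t = -1
  reflect_mem : ∀ α ∈ Phi, ∀ β ∈ Phi, β - pairing α β • α ∈ Phi

/-- The reflection `s_α` associated to a root `α` (the identity if `α ∉ Φ`). -/
noncomputable def RootSystemData.refl (R : RootSystemData V) (α : V) : V ≃ₗ[ℝ] V :=
  if h : α ∈ R.Phi then Module.reflection (R.pairing_self α h) else 1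

/-- The set of reflections `{s_α : α ∈ K}` associated to a set `K` of roots. -/
noncomputable def refls (R : RootSystemData V) (K : Set V) : Set (V ≃ₗ[ℝ] V) :=
  {s | ∃ α ∈ K, s = R.refl α}

/-- The Weyl group `W`, generated by all reflections `s_α`, `α ∈ Φ`. -/
noncomputable def weylGroup (R : RootSystemData V) : Subgroup (V ≃ₗ[ℝ] V) :=
  Subgroup.closure (refls R R.Phi)

/-- The subgroup `W_J` generated by the reflections `s_α`, `α ∈ J`. -/
noncomputable def WsubJ (R : RootSystemData V) (J : Set V) : Subgroup (V ≃ₗ[ℝ] V) :=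
  Subgroup.closure (refls R J)

/-- The word length of `w` with respect to a generating set `S` of a group. -/
noncomputable def lengthWrt {G : Type*} [Group G] (S : Set G) (w : G) : ℕ :=
  sInf {n | ∃ ls : List G, ls.length = n ∧ (∀ x ∈ ls, x ∈ S) ∧ ls.prod = w}

/-- The length function `ℓ` on `W` with respect to the simple reflections
`S = {s_α : α ∈ Δ}`. -/
noncomputable def len (R : RootSystemData V) (Δ : Set V) (w : V ≃ₗ[ℝ] V) : ℕ :=
  lengthWrt (refls R Δ) w

/-- `Pos` and `Δ` form a positive system with base `Δ` for the root system `R`: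
`Φ = Pos ⊔ (−Pos)`, `Δ ⊆ Pos` is linearly independent, and every positive root is a
nonnegative integral combination of simple roots. -/
structure IsBase (R : RootSystemData V) (Pos Δ : Set V) : Prop where
  pos_sub : Pos ⊆ R.Phi
  mem_or_neg : ∀ α ∈ R.Phi, α ∈ Pos ∨ -α ∈ Pos
  not_both : ∀ α : V, ¬(α ∈ Pos ∧ -α ∈ Pos)
  delta_sub : Δ ⊆ Pos
  indep : LinearIndependent ℝ (fun a : Δ => (a : V))
  decomp : ∀ β ∈ Pos, ∃ c : V →₀ ℕ, (c.support : Set V) ⊆ Δ ∧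
    β = c.sum (fun a m => (m : ℝ) • a)

/-- The set `W^J = {w ∈ W : w(α) ∈ Φ⁺ for all α ∈ J}` of minimal length representatives
of `W/W_J`. -/
noncomputable def WupJ (R : RootSystemData V) (Pos : Set V) (J : Set V) :
    Set (V ≃ₗ[ℝ] V) :=
  {w | w ∈ weylGroup R ∧ ∀ α ∈ J, w α ∈ Pos}

/-- The set `V^J = W^J \ ⋃_{α ∈ Δ\J} W^{J∪{α}}`. -/
noncomputable def VupJ (R : RootSystemData V) (Pos Δ : Set V) (J : Set V) :
    Set (V ≃ₗ[ℝ] V) :=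
  {w | w ∈ WupJ R Pos J ∧ ∀ α ∈ Δ, α ∉ J → w ∉ WupJ R Pos (J ∪ {α})}

/-- `Φ_J(1) = Φ⁻ \ (Φ⁻ ∩ W_J·J)`. -/
noncomputable def PhiJone (R : RootSystemData V) (Pos : Set V) (J : Set V) : Set V :=
  (R.Phi \ Pos) \ {β | ∃ v ∈ WsubJ R J, ∃ α ∈ J, β = v α}

/-- `Φ_J(w) = w · Φ_J(1)`. -/
noncomputable def PhiJ (R : RootSystemData V) (Pos : Set V) (J : Set V)
    (w : V ≃ₗ[ℝ] V) : Set V :=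
  (fun x => w x) '' (PhiJone R Pos J)

/-- `hProjJ R Pos J pJ` says that `pJ` is the projection `w ↦ (w)^J` sending an element
of `W` to the unique element of `W^J` in the coset `w W_J`. -/
noncomputable def IsProjJ (R : RootSystemData V) (Pos : Set V) (J : Set V)
    (pJ : (V ≃ₗ[ℝ] V) → (V ≃ₗ[ℝ] V)) : Prop :=
  ∀ w ∈ weylGroup R, pJ w ∈ WupJ R Pos J ∧ (pJ w)⁻¹ * w ∈ WsubJ R J

/-- The product `s_i ⋯ s_1` of the first `i` members of a sequence in a group. -/
noncomputable def chainProd {G : Type*} [Group G] (s : ℕ → G) (i : ℕ) : G :=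
  (((List.range' 1 i).map s).reverse).prod

/-- The chain `w^(0) = w`, `w^(i) = (s_i ⋯ s_1 w)^J` associated to `w` and a sequence
of simple reflections. -/
noncomputable def chainElt {G : Type*} [Group G] (pJ : G → G) (s : ℕ → G) (w : G)
    (i : ℕ) : G :=
  if i = 0 then w else pJ (chainProd s i * w)

/-- The partial order `<_J`:  `w <_J w'` iff there are simple reflections
`s_1, …, s_r` (`r ≥ 1`) such that, with `w^(i) = (s_i ⋯ s_1 w)^J`, the lengths
`ℓ(w^(i))` are strictly increasing and `w^(r) = w'`.  Taking `pJ = id`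
(and `J = ∅`) gives the weak left order `<_∅`. -/
noncomputable def ltJ {G : Type*} [Group G] (S : Set G) (ℓ : G → ℕ) (pJ : G → G)
    (w w' : G) : Prop :=
  ∃ r : ℕ, 1 ≤ r ∧ ∃ s : ℕ → G,
    (∀ m, 1 ≤ m → m ≤ r → s m ∈ S) ∧
    (∀ m, 1 ≤ m → m ≤ r → ℓ (chainElt pJ s w (m - 1)) < ℓ (chainElt pJ s w m)) ∧
    chainElt pJ s w r = w'

/-- `w` is the longest element of a subgroup `H` of `W` (with respect to `ℓ`). -/
noncomputable def IsLongestIn (R : RootSystemData V) (Δ : Set V)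
    (H : Subgroup (V ≃ₗ[ℝ] V)) (w : V ≃ₗ[ℝ] V) : Prop :=
  w ∈ H ∧ ∀ v ∈ H, len R Δ v ≤ len R Δ w

end PaperSp

namespace PaperSp

variable {V : Type} [AddCommGroup V] [Module ℝ V]

lemma refl_apply' (R : RootSystemData V) {α : V} (hα : α ∈ R.Phi) (x : V) :
    R.refl α x = x - R.pairing α x • α := by
  rw [RootSystemData.refl, dif_pos hα, Module.reflection_apply]

lemma refl_inv (R : RootSystemData V) (α : V) : (R.refl α)⁻¹ = R.refl α := by
  unfold RootSystemData.refl
  split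
  · exact (Module.reflection_symm _)
  · simp

lemma weylGroup_maps_phi (R : RootSystemData V) {g : V ≃ₗ[ℝ] V} (hg : g ∈ weylGroup R)
    {β : V} (hβ : β ∈ R.Phi) : g β ∈ R.Phi := by
  have key : ∀ g ∈ weylGroup R, (∀ β ∈ R.Phi, g β ∈ R.Phi) ∧ (∀ β ∈ R.Phi, g⁻¹ β ∈ R.Phi) := by
    intro g hg
    induction hg using Subgroup.closure_induction with
    | mem x hx =>
      obtain ⟨α, hα, rfl⟩ := hx
      refine ⟨fun β hβ => ?_, fun β hβ => ?_⟩
      · rw [refl_apply' R hα]; exact R.reflect_mem α hα β hβ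
      · rw [refl_inv, refl_apply' R hα]; exact R.reflect_mem α hα β hβ
    | one => exact ⟨fun β hβ => hβ, fun β hβ => by simpa using hβ⟩
    | mul x y hx hy ihx ihy =>
      refine ⟨fun β hβ => ihx.1 _ (ihy.1 _ hβ), fun β hβ => ?_⟩
      rw [mul_inv_rev]
      exact ihy.2 _ (ihx.2 _ hβ)
    | inv x hx ih => exact ⟨ih.2, by simpa using ih.1⟩
  exact (key g hg).1 β hβ

lemma WsubJ_maps_span (R : RootSystemData V) {J : Set V} (hJ : J ⊆ R.Phi)
    {v : V ≃ₗ[ℝ] V} (hv : v ∈ WsubJ R J) {x : V} (hx : x ∈ Submodule.span ℝ J) :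
    v x ∈ Submodule.span ℝ J := by
  have key : ∀ v ∈ WsubJ R J,
      (∀ x ∈ Submodule.span ℝ J, v x ∈ Submodule.span ℝ J) ∧
      (∀ x ∈ Submodule.span ℝ J, v⁻¹ x ∈ Submodule.span ℝ J) := by
    intro v hv
    induction hv using Subgroup.closure_induction with
    | mem s hs =>
      obtain ⟨α, hα, rfl⟩ := hs
      have h1 : ∀ x ∈ Submodule.span ℝ J, R.refl α x ∈ Submodule.span ℝ J := by
        intro x hx
        rw [refl_apply' R (hJ hα)]
        exact sub_mem hx (Submodule.smul_mem _ _ (Submodule.subset_span hα))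
      exact ⟨h1, by rw [refl_inv]; exact h1⟩
    | one => exact ⟨fun x hx => hx, fun x hx => by simpa using hx⟩
    | mul x y hx hy ihx ihy =>
      refine ⟨fun z hz => ihx.1 _ (ihy.1 _ hz), fun z hz => ?_⟩
      rw [mul_inv_rev]
      exact ihy.2 _ (ihx.2 _ hz)
    | inv x hx ih => exact ⟨ih.2, by simpa using ih.1⟩
  exact (key v hv).1 x hx

/-- The cone of nonnegative combinations of elements of `Δ`. -/
def cone (Δ : Set V) : Set V :=
  {x | ∃ c : V →₀ ℝ, ↑c.support ⊆ Δ ∧ (∀ a, 0 ≤ c a) ∧ x = c.sum fun a t => t • a}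

lemma cone_zero (Δ : Set V) : (0 : V) ∈ cone Δ :=
  ⟨0, by simp, fun a => le_refl 0, by simp⟩

lemma cone_add {Δ : Set V} {x y : V} (hx : x ∈ cone Δ) (hy : y ∈ cone Δ) :
    x + y ∈ cone Δ := by
  obtain ⟨c, hc, hc0, rfl⟩ := hx
  obtain ⟨d, hd, hd0, rfl⟩ := hy
  refine ⟨c + d, ?_, fun a => by simpa using add_nonneg (hc0 a) (hd0 a), ?_⟩
  · refine subset_trans (Finset.coe_subset.mpr Finsupp.support_add) ?_
    rw [Finset.coe_union]
    exact Set.union_subset hc hd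
  · rw [Finsupp.sum_add_index' (fun a => by simp) (fun a t s => add_smul t s a)]

lemma cone_smul {Δ : Set V} {t : ℝ} (ht : 0 ≤ t) {x : V} (hx : x ∈ cone Δ) :
    t • x ∈ cone Δ := by
  obtain ⟨c, hc, hc0, rfl⟩ := hx
  refine ⟨t • c, subset_trans (Finset.coe_subset.mpr Finsupp.support_smul) hc,
    fun a => by simpa using mul_nonneg ht (hc0 a), ?_⟩
  rw [Finsupp.sum_smul_index (fun a => by simp), Finsupp.smul_sum]
  simp [mul_smul]

lemma pos_sub_cone (R : RootSystemData V) {Pos Δ : Set V} (hBase : IsBase R Pos Δ) :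
    Pos ⊆ cone Δ := by
  intro β hβ
  obtain ⟨c, hc, hsum⟩ := hBase.decomp β hβ
  refine ⟨c.mapRange (fun n : ℕ => (n : ℝ)) Nat.cast_zero, ?_, ?_, ?_⟩
  · exact subset_trans (Finset.coe_subset.mpr (Finsupp.support_mapRange)) hc
  · intro a; rw [Finsupp.mapRange_apply]; positivity
  · rw [Finsupp.sum_mapRange_index (fun a => by simp)]
    exact hsum

lemma indep_key (R : RootSystemData V) {Pos Δ : Set V} (hBase : IsBase R Pos Δ)
    (l : V →₀ ℝ) (hl : ↑l.support ⊆ Δ) (hsum : (l.sum fun a t => t • a) = 0) :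
    l = 0 := by
  have h := (linearIndepOn_iff (v := (id : V → V)) (s := Δ)).mp hBase.indep
  refine h l (Finsupp.mem_supported ℝ l |>.mpr hl) ?_
  rw [Finsupp.linearCombination_apply]
  simpa using hsum

lemma cone_eq_zero (R : RootSystemData V) {Pos Δ : Set V} (hBase : IsBase R Pos Δ)
    {x : V} (hx : x ∈ cone Δ) (hnx : -x ∈ cone Δ) : x = 0 := by
  obtain ⟨c, hc, hc0, hcx⟩ := hx
  obtain ⟨d, hd, hd0, hdx⟩ := hnx
  have hsum : ((c + d).sum fun a t => t • a) = 0 := by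
    rw [Finsupp.sum_add_index' (fun a => by simp) (fun a t s => add_smul t s a),
      ← hcx, ← hdx]
    simp
  have hsupp : ↑(c + d).support ⊆ Δ := by
    refine subset_trans (Finset.coe_subset.mpr Finsupp.support_add) ?_
    rw [Finset.coe_union]; exact Set.union_subset hc hd
  have hcd := indep_key R hBase (c + d) hsupp hsum
  have hc' : c = 0 := by
    ext a
    have h1 : c a + d a = 0 := by
      have := DFunLike.congr_fun hcd a; simpa using this
    have := hc0 a; have := hd0 a
    simp only [Finsupp.coe_zero, Pi.zero_apply]
    linarith
  rw [hcx, hc']; simp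

lemma decomp_in_J' (R : RootSystemData V) {Pos Δ : Set V} (hBase : IsBase R Pos Δ)
    {J' : Set V} (hJ'Δ : J' ⊆ Δ) {β : V}
    (hβ : β ∈ Pos) (hspan : β ∈ Submodule.span ℝ J') :
    ∃ c : V →₀ ℕ, ↑c.support ⊆ J' ∧ β = c.sum fun a m => (m : ℝ) • a := by
  obtain ⟨c, hc, hsum⟩ := hBase.decomp β hβ
  obtain ⟨d, hd, hdsum⟩ := Submodule.mem_span_set.mp hspan
  set e := c.mapRange (fun n : ℕ => (n : ℝ)) Nat.cast_zero with he
  have hesum : (e.sum fun a t => t • a) = β := by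
    rw [he, Finsupp.sum_mapRange_index (fun a => by simp)]; exact hsum.symm
  have hsub : ((e - d).sum fun a t => t • a) = 0 := by
    rw [Finsupp.sum_sub_index (fun a t s => sub_smul t s a), hesum, hdsum, sub_self]
  have hesupp : ↑e.support ⊆ Δ :=
    subset_trans (Finset.coe_subset.mpr Finsupp.support_mapRange) hc
  have hsupp : ↑(e - d).support ⊆ Δ := by
    refine subset_trans (Finset.coe_subset.mpr Finsupp.support_sub) ?_
    rw [Finset.coe_union]
    exact Set.union_subset hesupp (subset_trans hd hJ'Δ)
  have hed : e = d := by
    have h0 := indep_key R hBase _ hsupp hsub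
    exact sub_eq_zero.mp h0
  refine ⟨c, ?_, hsum⟩
  intro a ha
  have h1 : c a ≠ 0 := Finsupp.mem_support_iff.mp ha
  have h2 : e a ≠ 0 := by
    rw [he, Finsupp.mapRange_apply]
    exact_mod_cast h1
  rw [hed] at h2
  exact hd (Finsupp.mem_support_iff.mpr h2)


/-- For subsets `J ⊆ J' ⊆ Δ` and any `w ∈ W^{J'}`, the difference
`Φ_J(w) \ Φ_{J'}(w)` is contained in the set `Φ⁻ = Φ \ Φ⁺` of negative roots. -/
theorem statement_0 {V : Type} [AddCommGroup V] [Module ℝ V]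
    (R : RootSystemData V) (Pos Δ : Set V) (hBase : IsBase R Pos Δ)
    (J J' : Set V) (hJJ' : J ⊆ J') (hJ'Δ : J' ⊆ Δ)
    (w : V ≃ₗ[ℝ] V) (hw : w ∈ WupJ R Pos J') :
    PhiJ R Pos J w \ PhiJ R Pos J' w ⊆ R.Phi \ Pos := by
  rintro x ⟨⟨β, hβ, rfl⟩, hx2⟩
  obtain ⟨⟨hβΦ, hβPos⟩, -⟩ := hβ
  have hβ' : ∃ v ∈ WsubJ R J', ∃ α ∈ J', β = v α := by
    by_contra h
    exact hx2 ⟨β, ⟨⟨hβΦ, hβPos⟩, h⟩, rfl⟩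
  obtain ⟨v, hv, α, hα, hβeq⟩ := hβ'
  have hJ'Φ : J' ⊆ R.Phi := fun a ha => hBase.pos_sub (hBase.delta_sub (hJ'Δ ha))
  have hwW : w ∈ weylGroup R := hw.1
  have hwβΦ : w β ∈ R.Phi := weylGroup_maps_phi R hwW hβΦ
  refine ⟨hwβΦ, ?_⟩
  intro hwβPos
  have hnegβ : -β ∈ Pos := (hBase.mem_or_neg β hβΦ).resolve_left hβPos
  have hspan : -β ∈ Submodule.span ℝ J' := by
    rw [hβeq, ← map_neg]
    exact WsubJ_maps_span R hJ'Φ hv (neg_mem (Submodule.subset_span hα))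
  obtain ⟨c, hc, hsum⟩ := decomp_in_J' R hBase hJ'Δ hnegβ hspan
  have hkey : -(w β) ∈ cone Δ := by
    have hmap : w (-β) = c.sum fun a m => (m : ℝ) • w a := by
      rw [hsum, map_finsuppSum]
      simp
    rw [← map_neg w β, hmap, Finsupp.sum]
    apply Finset.sum_induction _ (· ∈ cone Δ) (fun a b ha hb => cone_add ha hb) (cone_zero Δ)
    intro a ha
    exact cone_smul (by positivity) (pos_sub_cone R hBase (hw.2 a (hc ha)))
  have h0 : w β = 0 := cone_eq_zero R hBase (pos_sub_cone R hBase hwβPos) hkey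
  rw [h0] at hwβΦ
  exact R.zero_not_mem hwβΦ


end PaperSp
end

section
/- There exists a sequence w_Δ = w_0, w_1, …, w_r = id in W = S_{l+1} such that for every 1 ≤ i ≤ r, either w_{i−1} <_∅ w_i in the weak left order, or w_i = u w_{i−1} for some rotation u ∈ Ω. -/
/-!
STATEMENT 9: In W = S_{l+1} there is a sequence from the longest element w_Δ to the
identity in which each step either goes up in the weak left order or is
left-multiplication by a rotation.
-/

open Equiv

/-- The number of inversions of a permutation of `{0, …, l}` (the Coxeter length with
respect to the adjacent transpositions). -/
def invLen (l : ℕ) (w : Equiv.Perm (Fin (l + 1))) : ℕ :=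
  (Finset.univ.filter (fun p : Fin (l + 1) × Fin (l + 1) => p.1 < p.2 ∧ w p.2 < w p.1)).card

/-- The adjacent transposition `s_j` exchanging `j` and `j+1` (1-indexed: `s_j` exchanges
positions `j` and `j+1`, i.e. the `Fin`-indices `j-1` and `j`), for `1 ≤ j ≤ l`. -/
def adjTransp (l : ℕ) (j : ℕ) : Equiv.Perm (Fin (l + 1)) :=
  if h : 1 ≤ j ∧ j ≤ l then Equiv.swap ⟨j - 1, by omega⟩ ⟨j, by omega⟩ else 1

/-- The product `s_{j_m} ⋯ s_{j_1}` of the first `m` of a sequence of adjacent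
transpositions (with indices `j_1, …, j_m`). -/
def adjProd (l : ℕ) (js : ℕ → ℕ) (m : ℕ) : Equiv.Perm (Fin (l + 1)) :=
  (((List.range' 1 m).map (fun k => adjTransp l (js k))).reverse).prod

/-- The weak left order on `S_{l+1}`:  `w <_∅ w'` iff `w' = s_{j_r} ⋯ s_{j_1} w` for some
`r ≥ 1` and indices `j_1, …, j_r ∈ {1, …, l}` with
`ℓ(s_{j_m} ⋯ s_{j_1} w) = ℓ(w) + m` for all `1 ≤ m ≤ r`. -/
def weakLtA (l : ℕ) (w w' : Equiv.Perm (Fin (l + 1))) : Prop :=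
  ∃ r : ℕ, 1 ≤ r ∧ ∃ js : ℕ → ℕ,
    (∀ m, 1 ≤ m → m ≤ r → 1 ≤ js m ∧ js m ≤ l) ∧
    (∀ m, 1 ≤ m → m ≤ r → invLen l (adjProd l js m * w) = invLen l w + m) ∧
    adjProd l js r * w = w'

/-- The longest element `w_Δ` of `S_{l+1}`, i.e. `k ↦ l + 2 − k` in 1-indexed notation. -/
def longestPermA (l : ℕ) : Equiv.Perm (Fin (l + 1)) :=
  Function.Involutive.toPerm (fun k => ⟨l - k.val, by omega⟩)
    (by intro k; ext; simp; omega)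

def pinv (l : ℕ) (w : Equiv.Perm (Fin (l + 1))) : Finset (Fin (l + 1) × Fin (l + 1)) :=
  Finset.univ.filter (fun p : Fin (l + 1) × Fin (l + 1) => p.1 < p.2 ∧ w p.2 < w p.1)

lemma invLen_eq_card (l : ℕ) (w : Equiv.Perm (Fin (l + 1))) : invLen l w = (pinv l w).card := rfl

lemma mem_pinv (l : ℕ) (w : Equiv.Perm (Fin (l + 1))) (p : Fin (l+1) × Fin (l+1)) :
    p ∈ pinv l w ↔ p.1 < p.2 ∧ w p.2 < w p.1 := by simp [pinv]

lemma exists_descent (n : ℕ) (z : Equiv.Perm (Fin (n + 1))) (hz : z ≠ 1) :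
    ∃ a : ℕ, ∃ h : a < n, z ⟨a + 1, by omega⟩ < z ⟨a, by omega⟩ := by
  by_contra hc
  push_neg at hc
  have hstep : ∀ a (h : a < n), z ⟨a, by omega⟩ < z ⟨a + 1, by omega⟩ := by
    intro a h
    refine lt_of_le_of_ne (hc a h) ?_
    intro he
    have := z.injective he
    simp [Fin.ext_iff] at this
  have key : ∀ d a (h : a + d ≤ n), (z ⟨a, by omega⟩).val + d ≤ (z ⟨a + d, by omega⟩).val := by
    intro d
    induction d with
    | zero => intro a h; simp
    | succ d ih =>
      intro a h
      have h1 := ih a (by omega)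
      have h2 := hstep (a + d) (by omega)
      have h2' : (z ⟨a + d, by omega⟩).val < (z ⟨a + d + 1, by omega⟩).val := h2
      have he : (z ⟨a + (d + 1), by omega⟩ : Fin (n+1)) = z ⟨a + d + 1, by omega⟩ := rfl
      rw [he]
      omega
  have fix : ∀ p : Fin (n + 1), z p = p := by
    intro p
    have h1 : (z ⟨0, by omega⟩).val + p.val ≤ (z ⟨0 + p.val, by omega⟩).val := key p.val 0 (by omega)
    have h2 : (z ⟨p.val, by omega⟩).val + (n - p.val) ≤ (z ⟨p.val + (n - p.val), by omega⟩).val :=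
      key (n - p.val) p.val (by omega)
    have h3 : (z ⟨p.val + (n - p.val), by omega⟩).val ≤ n := by
      exact Nat.lt_succ_iff.mp (z _).isLt
    have hp : (⟨p.val, by omega⟩ : Fin (n+1)) = p := by simp [Fin.ext_iff]
    rw [hp] at h2
    have : (z p).val = p.val := by
      have h0 : (⟨0 + p.val, by omega⟩ : Fin (n+1)) = p := by simp [Fin.ext_iff]
      rw [h0] at h1
      omega
    simp [Fin.ext_iff, this]
  exact hz (Equiv.ext fun p => fix p)

set_option maxHeartbeats 2000000 in
lemma step_lemma (l : ℕ) (x y : Equiv.Perm (Fin (l + 1))) (hne : x ≠ y)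
    (hsub : pinv l x ⊆ pinv l y) :
    ∃ j, 1 ≤ j ∧ j ≤ l ∧ invLen l (adjTransp l j * x) = invLen l x + 1 ∧
      pinv l (adjTransp l j * x) ⊆ pinv l y := by
  set z : Equiv.Perm (Fin (l+1)) := y * x⁻¹ with hzdef
  have hz : z ≠ 1 := by
    intro h
    exact hne ((mul_inv_eq_one.mp h).symm)
  obtain ⟨a, ha, hdes⟩ := exists_descent l z hz
  set A : Fin (l+1) := ⟨a, by omega⟩ with hA
  set B : Fin (l+1) := ⟨a + 1, by omega⟩ with hB
  have hABne : A ≠ B := by simp [hA, hB, Fin.ext_iff]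
  set p : Fin (l+1) := x⁻¹ A with hp
  set q : Fin (l+1) := x⁻¹ B with hq
  have hxp : x p = A := x.apply_symm_apply A
  have hxq : x q = B := x.apply_symm_apply B
  have hzA : z A = y p := by rw [hzdef]; simp [hp]
  have hzB : z B = y q := by rw [hzdef]; simp [hq]
  have hdes' : y q < y p := by rw [← hzA, ← hzB]; exact hdes
  have hpq : p < q := by
    rcases lt_trichotomy p q with h | h | h
    · exact h
    · exact absurd (show A = B by rw [← hxp, h, hxq]) hABne
    · exfalso
      have hmem : (q, p) ∈ pinv l x := by
        rw [mem_pinv]; exact ⟨h, by rw [hxp, hxq]; exact Fin.mk_lt_mk.mpr (by omega)⟩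
      have := (mem_pinv l y (q, p)).mp (hsub hmem)
      exact absurd hdes' (not_lt.mpr (le_of_lt this.2))
  have hadj : adjTransp l (a + 1) = Equiv.swap A B := by
    rw [adjTransp, dif_pos (by omega)]
    congr 1 <;> simp [hA, hB, Fin.ext_iff]
  -- the inversion set identity
  have hins : pinv l (Equiv.swap A B * x) = insert (p, q) (pinv l x) := by
    ext ⟨u, v⟩
    simp only [mem_pinv, Finset.mem_insert, Prod.mk.injEq, Perm.mul_apply]
    constructor
    · rintro ⟨huv, hlt⟩
      by_cases h1 : x u = A
      · by_cases h4 : x v = B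
        · left
          exact ⟨x.injective (by rw [h1, hxp]), x.injective (by rw [h4, hxq])⟩
        · right
          refine ⟨huv, ?_⟩
          rw [h1, swap_apply_left] at hlt
          have h3 : x v ≠ A := fun h => (by rw [← h1] at h; exact absurd (x.injective h) (ne_of_lt huv).symm)
          rcases eq_or_ne (x v) B with h | h
          · exact absurd hlt (by rw [h, swap_apply_right]; exact not_lt.mpr (le_of_lt (Fin.mk_lt_mk.mpr (by omega))))
          · rw [swap_apply_of_ne_of_ne h3 h] at hlt
            rw [h1]
            have : (x v).val < a + 1 := hlt
            exact Fin.lt_def.mpr (by have := Fin.val_ne_iff.mpr h3; simp [hA] at this ⊢; omega)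
      · by_cases h2 : x u = B
        · -- x u = B; then u = q
          have hu : u = q := x.injective (by rw [h2, hxq])
          by_cases h3 : x v = A
          · have hv : v = p := x.injective (by rw [h3, hxp])
            exfalso; rw [hu, hv] at huv; exact absurd hpq (not_lt.mpr (le_of_lt huv))
          · right
            refine ⟨huv, ?_⟩
            have h4 : x v ≠ B := fun h => (by rw [← h2] at h; exact absurd (x.injective h) (ne_of_lt huv).symm)
            rw [h2, swap_apply_right, swap_apply_of_ne_of_ne h3 h4] at hlt
            have : (x v).val < a := hlt
            rw [h2]
            exact Fin.lt_def.mpr (by simp [hB]; omega)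
        · -- x u ∉ {A, B}
          right
          refine ⟨huv, ?_⟩
          rw [swap_apply_of_ne_of_ne h1 h2] at hlt
          by_cases h3 : x v = A
          · rw [h3, swap_apply_left] at hlt
            have h5 : a + 1 < (x u).val := hlt
            rw [h3]
            exact Fin.lt_def.mpr (by simp [hA]; omega)
          · by_cases h4 : x v = B
            · rw [h4, swap_apply_right] at hlt
              have h5 : a < (x u).val := hlt
              have h6 := Fin.val_ne_iff.mpr h2
              simp [hB] at h6
              rw [h4]
              exact Fin.lt_def.mpr (by simp [hB]; omega)
            · rwa [swap_apply_of_ne_of_ne h3 h4] at hlt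
    · rintro (⟨hu, hv⟩ | ⟨huv, hlt⟩)
      · subst hu; subst hv
        refine ⟨hpq, ?_⟩
        rw [hxp, hxq, swap_apply_left, swap_apply_right]
        exact Fin.mk_lt_mk.mpr (by omega)
      · refine ⟨huv, ?_⟩
        by_cases h1 : x u = A
        · have h3 : x v ≠ A := fun h => absurd (x.injective (h.trans h1.symm)) (ne_of_lt huv).symm
          have h4 : x v ≠ B := by
            intro h
            rw [h1, h] at hlt
            exact absurd hlt (not_lt.mpr (le_of_lt (Fin.mk_lt_mk.mpr (by omega))))
          rw [h1, swap_apply_left, swap_apply_of_ne_of_ne h3 h4]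
          have hlt' : (x v).val < a := by
            have hv1 := Fin.lt_def.mp hlt
            have h3' := Fin.val_ne_iff.mpr h3
            have hxu : (x u).val = a := by rw [h1]
            simp [hA] at h3'
            omega
          exact Fin.lt_def.mpr (by simp [hB]; omega)
        · by_cases h2 : x u = B
          · have h4 : x v ≠ B := fun h => absurd (x.injective (h.trans h2.symm)) (ne_of_lt huv).symm
            by_cases h3 : x v = A
            · exfalso
              have hu : u = q := x.injective (by rw [h2, hxq])
              have hv : v = p := x.injective (by rw [h3, hxp])
              rw [hu, hv] at huv
              exact absurd hpq (not_lt.mpr (le_of_lt huv))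
            · rw [h2, swap_apply_right, swap_apply_of_ne_of_ne h3 h4]
              have hlt' : (x v).val < a := by
                have hv1 := Fin.lt_def.mp hlt
                have h3' := Fin.val_ne_iff.mpr h3
                have h4' := Fin.val_ne_iff.mpr h4
                have hxu : (x u).val = a + 1 := by rw [h2]
                simp [hA] at h3'
                simp [hB] at h4'
                omega
              exact Fin.lt_def.mpr (by simp [hA]; omega)
          · rw [swap_apply_of_ne_of_ne h1 h2]
            by_cases h3 : x v = A
            · rw [h3, swap_apply_left]
              have hlt' : a < (x u).val := by rw [h3] at hlt; exact Fin.lt_def.mp hlt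
              have h2' := Fin.val_ne_iff.mpr h2
              simp [hB] at h2'
              exact Fin.lt_def.mpr (by simp [hB]; omega)
            · by_cases h4 : x v = B
              · rw [h4, swap_apply_right]
                have hlt' : a + 1 < (x u).val := by rw [h4] at hlt; exact Fin.lt_def.mp hlt
                exact Fin.lt_def.mpr (by simp [hA]; omega)
              · rwa [swap_apply_of_ne_of_ne h3 h4]
  have hnotmem : (p, q) ∉ pinv l x := by
    rw [mem_pinv]
    rintro ⟨-, h⟩
    rw [hxp, hxq] at h
    exact absurd h (not_lt.mpr (le_of_lt (Fin.mk_lt_mk.mpr (by omega))))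
  refine ⟨a + 1, by omega, by omega, ?_, ?_⟩
  · rw [invLen_eq_card, invLen_eq_card, hadj, hins, Finset.card_insert_of_notMem hnotmem]
  · rw [hadj, hins]
    intro pr hpr
    rcases Finset.mem_insert.mp hpr with h | h
    · subst h
      rw [mem_pinv]
      exact ⟨hpq, by rw [show (y (p,q).2) = y q from rfl, show (y (p,q).1) = y p from rfl]; exact hdes'⟩
    · exact hsub h

lemma adjProd_zero (l : ℕ) (js : ℕ → ℕ) : adjProd l js 0 = 1 := rfl

lemma adjProd_succ (l : ℕ) (js : ℕ → ℕ) (m : ℕ) :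
    adjProd l js (m + 1) = adjTransp l (js (m + 1)) * adjProd l js m := by
  rw [adjProd, adjProd, List.range'_concat]
  simp [Nat.add_comm 1 m]

lemma adjProd_one (l : ℕ) (js : ℕ → ℕ) : adjProd l js 1 = adjTransp l (js 1) := by
  have h := adjProd_succ l js 0
  simpa [adjProd_zero] using h

lemma adjProd_shift (l : ℕ) (j : ℕ) (js' : ℕ → ℕ) (m : ℕ) (hm : 1 ≤ m) :
    adjProd l (fun k => if k ≤ 1 then j else js' (k - 1)) m
      = adjProd l js' (m - 1) * adjTransp l j := by
  induction m with
  | zero => omega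
  | succ m ih =>
    rcases Nat.eq_or_lt_of_le hm with h | h
    · simp only [← h]
      rw [adjProd_succ, adjProd_zero]
      simp
      rfl
    · have hm1 : 1 ≤ m := by omega
      rw [adjProd_succ, ih hm1]
      have h1 : ¬ (m + 1 ≤ 1) := by omega
      rw [if_neg h1]
      have h2 : m + 1 - 1 = m := by omega
      rw [h2, show m = (m-1) + 1 from by omega, adjProd_succ]
      rw [show m - 1 + 1 - 1 = m - 1 from by omega]
      group

lemma weakLtA_of_pinv_subset (l : ℕ) (y : Equiv.Perm (Fin (l + 1))) :
    ∀ n x, invLen l y - invLen l x ≤ n → x ≠ y → pinv l x ⊆ pinv l y → weakLtA l x y := by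
  intro n
  induction n with
  | zero =>
    intro x hn hne hsub
    obtain ⟨j, hj1, hj2, hcard, hsub'⟩ := step_lemma l x y hne hsub
    -- card x < card y, so invLen y - invLen x ≥ 1, contradiction
    exfalso
    have h1 : invLen l (adjTransp l j * x) ≤ invLen l y := by
      rw [invLen_eq_card, invLen_eq_card]
      exact Finset.card_le_card hsub'
    omega
  | succ n ih =>
    intro x hn hne hsub
    obtain ⟨j, hj1, hj2, hcard, hsub'⟩ := step_lemma l x y hne hsub
    set x' := adjTransp l j * x with hx'
    by_cases hxy : x' = y
    · refine ⟨1, le_refl 1, fun _ => j, fun m _ _ => ⟨hj1, hj2⟩, ?_, ?_⟩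
      · intro m h1 h2
        have : m = 1 := by omega
        subst this
        rw [adjProd_one]
        exact hcard
      · rw [adjProd_one]
        exact hxy
    · have h1 : invLen l x' ≤ invLen l y := by
        rw [invLen_eq_card, invLen_eq_card]
        exact Finset.card_le_card hsub'
      obtain ⟨r', hr', js', hbound', hlen', hfin'⟩ := ih x' (by omega) hxy hsub'
      refine ⟨r' + 1, by omega, fun k => if k ≤ 1 then j else js' (k - 1), ?_, ?_, ?_⟩
      · intro m h1' h2'
        by_cases h : m ≤ 1
        · simp [h]; omega
        · simp only [if_neg h]
          exact hbound' (m - 1) (by omega) (by omega)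
      · intro m h1' h2'
        rw [adjProd_shift l j js' m h1']
        rw [mul_assoc, ← hx']
        by_cases h : m = 1
        · subst h
          rw [show (1:ℕ) - 1 = 0 from rfl, adjProd_zero, one_mul]
          exact hcard
        · have := hlen' (m - 1) (by omega) (by omega)
          rw [this, hcard]
          omega
      · rw [adjProd_shift l j js' (r' + 1) (by omega), mul_assoc, ← hx']
        rw [show r' + 1 - 1 = r' from by omega]
        exact hfin'

/-- `z_i`: fixes positions `< i`, reverses the rest. -/
def zperm (l i : ℕ) : Equiv.Perm (Fin (l + 1)) :=
  Function.Involutive.toPerm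
    (fun p => if h : p.val < i then p else ⟨l + i - p.val, by omega⟩)
    (by
      intro p
      by_cases h : p.val < i
      · simp [h]
      · have hp : p.val ≤ l := by omega
        have h2 : ¬ (l + i - p.val < i) := by omega
        simp only [dif_neg h]
        rw [dif_neg h2]
        ext
        simp
        omega)

lemma zperm_val (l i : ℕ) (p : Fin (l + 1)) :
    (zperm l i p).val = if p.val < i then p.val else l + i - p.val := by
  show ((if h : p.val < i then p else ⟨l + i - p.val, by omega⟩ : Fin (l+1))).val = _
  by_cases h : p.val < i <;> simp [h]

lemma zperm_zero (l : ℕ) : zperm l 0 = longestPermA l := by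
  apply Equiv.ext
  intro p
  have h1 := zperm_val l 0 p
  have h2 : (longestPermA l p).val = l - p.val := by
    rfl
  simp at h1
  exact Fin.ext (by rw [h1, h2])

lemma zperm_top (l : ℕ) : zperm l l = 1 := by
  apply Equiv.ext
  intro p
  have h1 := zperm_val l l p
  apply Fin.ext
  by_cases h : p.val < l
  · simpa [h] using h1
  · have : p.val = l := by omega
    rw [if_neg h] at h1
    simpa [this] using h1

lemma finRotate_pow_apply (l m : ℕ) (v : Fin (l + 1)) :
    ((finRotate (l + 1)) ^ m) v = ⟨(v.val + m) % (l + 1), Nat.mod_lt _ (by omega)⟩ := by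
  induction m with
  | zero => simp [Fin.ext_iff, Nat.mod_eq_of_lt v.isLt]
  | succ m ih =>
    rw [pow_succ', Perm.mul_apply, ih, finRotate_succ_apply]
    ext
    simp only [Fin.val_add, Fin.val_one']
    rw [← Nat.add_mod]
    congr 1

lemma finRotate_pow_top (l : ℕ) : (finRotate (l + 1)) ^ (l + 1) = 1 := by
  apply Equiv.ext
  intro v
  rw [finRotate_pow_apply]
  apply Fin.ext
  simp
  omega

/-- `y_i = rot^(l-i) z_{i+1}` explicit formula (value level). -/
lemma yperm_val (l i : ℕ) (hi : i < l) (p : Fin (l + 1)) :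
    (((finRotate (l + 1)) ^ (l - i) * zperm l (i + 1)) p).val
      = if p.val ≤ i then p.val + (l - i) else l - p.val := by
  rw [Perm.mul_apply, finRotate_pow_apply]
  simp only
  rw [zperm_val]
  by_cases h : p.val < i + 1
  · rw [if_pos h, if_pos (by omega)]
    exact Nat.mod_eq_of_lt (by omega)
  · rw [if_neg h, if_neg (by omega)]
    have hp : p.val ≤ l := by omega
    have h2 : l + (i + 1) - p.val + (l - i) = (l + 1) + (l - p.val) := by omega
    rw [h2, Nat.add_mod_left]
    exact Nat.mod_eq_of_lt (by omega)


lemma pinv_zperm_subset (l i : ℕ) (hi : i < l) :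
    pinv l (zperm l i) ⊆ pinv l ((finRotate (l + 1)) ^ (l - i) * zperm l (i + 1)) := by
  intro ⟨u, v⟩ hm
  rw [mem_pinv] at hm ⊢
  obtain ⟨huv, hlt⟩ := hm
  simp only at hlt huv ⊢
  have hlt' : (zperm l i v).val < (zperm l i u).val := Fin.lt_def.mp hlt
  rw [zperm_val, zperm_val] at hlt'
  have huval := Fin.lt_def.mp huv
  have hvl : v.val ≤ l := by omega
  -- derive u.val ≥ i
  have hu : ¬ (u.val < i) := by
    intro hu
    rw [if_pos hu] at hlt'
    by_cases hv : v.val < i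
    · rw [if_pos hv] at hlt'; omega
    · rw [if_neg hv] at hlt'; omega
  have hv : ¬ (v.val < i) := by omega
  rw [if_neg hu, if_neg hv] at hlt'
  refine ⟨huv, Fin.lt_def.mpr ?_⟩
  rw [yperm_val l i hi, yperm_val l i hi]
  by_cases h : u.val ≤ i
  · rw [if_pos h, if_neg (by omega)]
    omega
  · rw [if_neg h, if_neg (by omega)]
    omega

theorem statement_9 (l : ℕ) (hl : 1 ≤ l) :
    ∃ (r : ℕ) (w : ℕ → Equiv.Perm (Fin (l + 1))),
      w 0 = longestPermA l ∧ w r = 1 ∧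
      ∀ i, 1 ≤ i → i ≤ r →
        weakLtA l (w (i - 1)) (w i) ∨
        ∃ u : Equiv.Perm (Fin (l + 1)), (∃ m : ℕ, u = (finRotate (l + 1)) ^ m) ∧
          w i = u * w (i - 1) := by
  refine ⟨2 * l,
    fun n => if n % 2 = 0 then zperm l (n / 2)
      else (finRotate (l + 1)) ^ (l - n / 2) * zperm l (n / 2 + 1), ?_, ?_, ?_⟩
  · simp only
    norm_num
    exact zperm_zero l
  · simp only
    rw [if_pos (by omega), show 2 * l / 2 = l from by omega, zperm_top]
  · intro i h1 h2
    simp only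
    by_cases hpar : i % 2 = 0
    · -- even step: rotation
      right
      have e2 : ¬ ((i - 1) % 2 = 0) := by omega
      have e3 : (i - 1) / 2 = i / 2 - 1 := by omega
      have e4 : i / 2 = (i / 2 - 1) + 1 := by omega
      set t := i / 2 - 1 with ht
      have htl : t ≤ l - 1 := by omega
      refine ⟨(finRotate (l + 1)) ^ (t + 1), ⟨t + 1, rfl⟩, ?_⟩
      rw [if_pos hpar, if_neg e2, e3, e4]
      rw [← mul_assoc, ← pow_add, show t + 1 + (l - t) = l + 1 from by omega,
        finRotate_pow_top, one_mul]
    · -- odd step: weak order up (or trivial rotation)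
      have e2 : (i - 1) % 2 = 0 := by omega
      have e3 : (i - 1) / 2 = i / 2 := by omega
      have e4 : i / 2 < l := by omega
      rw [if_neg hpar, if_pos e2, e3]
      set t := i / 2 with ht
      set Y := (finRotate (l + 1)) ^ (l - t) * zperm l (t + 1) with hY
      by_cases heq : zperm l t = Y
      · right
        exact ⟨1, ⟨0, (pow_zero _).symm⟩, by rw [one_mul, ← heq]⟩
      · left
        exact weakLtA_of_pinv_subset l Y (invLen l Y - invLen l (zperm l t)) (zperm l t)
          le_rfl heq (pinv_zperm_subset l t e4)
end

section
/- There exists a sequence w_Δ = w_0, w_1, …, w_r = id in the group W of signed permutations such that for every 1 ≤ i ≤ r, either w_{i−1} <_∅ w_i in the weak left order, or w_i = u₀ w_{i−1}. -/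
/-!
STATEMENT 10 (type B_l): In the hyperoctahedral group of signed permutations there is a
sequence from the longest element `w_Δ = [−1, …, −l]` to the identity in which each step
either goes up in the weak left order or is left multiplication by `u₀ = [1, …, l−1, −l]`.
-/

open Equiv

/-- The set of signed permutations: bijections `w` of `ℤ` with `w(−a) = −w(a)` which fix
every integer of absolute value `> l` (such a bijection automatically preserves
`{−l, …, −1, 1, …, l}`). -/
def SignedPermSet (l : ℕ) : Set (Equiv.Perm ℤ) :=
  {w | (∀ a : ℤ, w (-a) = -w a) ∧ ∀ a : ℤ, (l : ℤ) < |a| → w a = a}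

/-- The Coxeter length of a signed permutation:
`ℓ(w) = #{(i,j) : 1 ≤ i < j ≤ l, w(i) > w(j)} − Σ_{1 ≤ j ≤ l, w(j) < 0} w(j)`. -/
noncomputable def signedLen (l : ℕ) (w : Equiv.Perm ℤ) : ℤ :=
  (((Finset.Icc (1 : ℤ) l ×ˢ Finset.Icc (1 : ℤ) l).filter
      (fun p => p.1 < p.2 ∧ w p.2 < w p.1)).card : ℤ)
    - ∑ j ∈ Finset.Icc (1 : ℤ) l, (if w j < 0 then w j else 0)

/-- The Coxeter generator `s_i` of the group of signed permutations: for `1 ≤ i ≤ l − 1`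
it exchanges `l − i` and `l − i + 1` (and `−(l−i)` and `−(l−i+1)`); `s_l` is the sign
change in the first coordinate, exchanging `1` and `−1`. -/
def signedGen (l : ℕ) (i : ℕ) : Equiv.Perm ℤ :=
  if i = l then Equiv.swap 1 (-1)
  else if 1 ≤ i ∧ i ≤ l - 1 then
    (Equiv.swap ((l : ℤ) - i) ((l : ℤ) - i + 1)) *
      (Equiv.swap (-((l : ℤ) - i)) (-((l : ℤ) - i) - 1))
  else 1

/-- The product `σ_m ⋯ σ_1` of the first `m` generators of a sequence of generators
(with indices `j_1, …, j_m ∈ {1, …, l}`). -/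
def signedProd (l : ℕ) (js : ℕ → ℕ) (m : ℕ) : Equiv.Perm ℤ :=
  (((List.range' 1 m).map (fun k => signedGen l (js k))).reverse).prod

/-- The weak left order: `w <_∅ w'` iff `w' = σ_r ⋯ σ_1 w` for generators
`σ_m = s_{j_m}` with `ℓ(σ_m ⋯ σ_1 w) = ℓ(w) + m` for all `1 ≤ m ≤ r`. -/
def signedWeakLt (l : ℕ) (w w' : Equiv.Perm ℤ) : Prop :=
  ∃ r : ℕ, 1 ≤ r ∧ ∃ js : ℕ → ℕ,
    (∀ m, 1 ≤ m → m ≤ r → 1 ≤ js m ∧ js m ≤ l) ∧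
    (∀ m, 1 ≤ m → m ≤ r → signedLen l (signedProd l js m * w) = signedLen l w + m) ∧
    signedProd l js r * w = w'

/-- The longest element `w_Δ = [−1, −2, …, −l]`, i.e. minus the identity on
`{−l, …, −1, 1, …, l}`. -/
def signedLongest (l : ℕ) : Equiv.Perm ℤ :=
  Function.Involutive.toPerm (fun x => if |x| ≤ (l : ℤ) then -x else x)
    (by
      intro x
      by_cases h : |x| ≤ (l : ℤ)
      · simp only [if_pos h, abs_neg, if_pos h, neg_neg]
      · simp only [if_neg h, if_neg h])

/-- The element `u₀ = [1, …, l−1, −l]` (the nontrivial element of `W_Ω` in type `B_l`). -/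
def uB (l : ℕ) : Equiv.Perm ℤ := Equiv.swap (l : ℤ) (-(l : ℤ))

namespace St10

def sg (a : ℤ) : Equiv.Perm ℤ := Equiv.swap a (a+1) * Equiv.swap (-a) (-a-1)

lemma sg_eval (a : ℤ) (ha : 1 ≤ a) (z : ℤ) :
    sg a z = if z = a then a+1 else if z = a+1 then a
      else if z = -a then -a-1 else if z = -a-1 then -a else z := by
  simp only [sg, Equiv.Perm.mul_apply, Equiv.swap_apply_def]
  split_ifs <;> omega

lemma uB_eval (l : ℕ) (hl : 1 ≤ l) (z : ℤ) :
    uB l z = if z = (l:ℤ) then -(l:ℤ) else if z = -(l:ℤ) then (l:ℤ) else z := by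
  have : (1:ℤ) ≤ l := by exact_mod_cast hl
  simp only [uB, Equiv.swap_apply_def]

lemma sw1_eval (z : ℤ) :
    Equiv.swap (1:ℤ) (-1) z = if z = 1 then -1 else if z = -1 then 1 else z := by
  simp only [Equiv.swap_apply_def]

lemma signedGen_eq_sg (l i : ℕ) (h1 : 1 ≤ i) (h2 : i ≤ l - 1) :
    signedGen l i = sg ((l:ℤ) - i) := by
  have h : i ≠ l := by omega
  rw [signedGen, if_neg h, if_pos (And.intro h1 h2)]; rfl

lemma signedGen_last (l : ℕ) : signedGen l l = Equiv.swap 1 (-1) := by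
  simp [signedGen]

lemma mem_mul {l : ℕ} {v w : Equiv.Perm ℤ} (hv : v ∈ SignedPermSet l)
    (hw : w ∈ SignedPermSet l) : v * w ∈ SignedPermSet l := by
  obtain ⟨hv1, hv2⟩ := hv
  obtain ⟨hw1, hw2⟩ := hw
  refine ⟨fun a => ?_, fun a ha => ?_⟩
  · simp only [Equiv.Perm.mul_apply, hw1, hv1]
  · simp only [Equiv.Perm.mul_apply, hw2 a ha]
    exact hv2 a ha

lemma sg_mem (l : ℕ) (a : ℤ) (ha : 1 ≤ a) (hal : a + 1 ≤ (l:ℤ)) :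
    sg a ∈ SignedPermSet l := by
  refine ⟨fun z => ?_, fun z hz => ?_⟩
  · rw [sg_eval a ha, sg_eval a ha]; split_ifs <;> omega
  · have := lt_abs.mp hz
    rw [sg_eval a ha]; split_ifs <;> omega

lemma uB_mem (l : ℕ) (hl : 1 ≤ l) : uB l ∈ SignedPermSet l := by
  refine ⟨fun z => ?_, fun z hz => ?_⟩
  · rw [uB_eval l hl, uB_eval l hl]; split_ifs <;> omega
  · have := lt_abs.mp hz
    rw [uB_eval l hl]; split_ifs <;> omega

lemma sw1_mem (l : ℕ) (hl : 1 ≤ l) : Equiv.swap (1:ℤ) (-1) ∈ SignedPermSet l := by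
  have hl' : (1:ℤ) ≤ l := by exact_mod_cast hl
  refine ⟨fun z => ?_, fun z hz => ?_⟩
  · rw [sw1_eval, sw1_eval]; split_ifs <;> omega
  · have := lt_abs.mp hz
    rw [sw1_eval]; split_ifs <;> omega

lemma signedGen_mem (l i : ℕ) (h1 : 1 ≤ i) (h2 : i ≤ l) : signedGen l i ∈ SignedPermSet l := by
  rcases eq_or_ne i l with h | h
  · subst h; rw [signedGen_last]; exact sw1_mem i h1
  · have h2' : i ≤ l - 1 := by omega
    rw [signedGen_eq_sg l i h1 h2']
    have hl : 2 ≤ l := by omega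
    exact sg_mem l ((l:ℤ) - i) (by omega) (by omega)



lemma step_iii (l : ℕ) (w : Equiv.Perm ℤ) (hw : ∀ x : ℤ, w (-x) = -w x) (a : ℤ) (ha : 1 ≤ a)
    (hal : a + 1 ≤ (l:ℤ)) (P Q : ℤ) (hP1 : 1 ≤ P) (hPl : P ≤ (l:ℤ)) (hQ1 : 1 ≤ Q)
    (hQl : Q ≤ (l:ℤ)) (hwP : w P = -a) (hwQ : w Q = a+1) :
    signedLen l (sg a * w) = signedLen l w + 1 := by
  have hinj := w.injective
  have hMP : w (-P) = a := by rw [hw P, hwP]; ring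
  have hMQ : w (-Q) = -(a+1) := by rw [hw Q, hwQ]
  have hne_a : ∀ j : ℤ, 1 ≤ j → w j ≠ a := by
    intro j hj hja
    have : j = -P := hinj (hja.trans hMP.symm)
    omega
  have hne_ma1 : ∀ j : ℤ, 1 ≤ j → w j ≠ -(a+1) := by
    intro j hj hja
    have : j = -Q := hinj (hja.trans hMQ.symm)
    omega
  have hcard : (Finset.Icc (1:ℤ) l ×ˢ Finset.Icc (1:ℤ) l).filter
      (fun p => p.1 < p.2 ∧ (sg a * w) p.2 < (sg a * w) p.1)
      = (Finset.Icc (1:ℤ) l ×ˢ Finset.Icc (1:ℤ) l).filter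
        (fun p => p.1 < p.2 ∧ w p.2 < w p.1) := by
    apply Finset.filter_congr
    intro p hp
    rw [Finset.mem_product, Finset.mem_Icc, Finset.mem_Icc] at hp
    obtain ⟨⟨h11, h12⟩, h21, h22⟩ := hp
    have e1 := hne_a p.1 h11; have e2 := hne_a p.2 h21
    have e3 := hne_ma1 p.1 h11; have e4 := hne_ma1 p.2 h21
    simp only [Equiv.Perm.mul_apply, sg_eval a ha]
    split_ifs <;> omega
  have hsum : ∑ j ∈ Finset.Icc (1:ℤ) l, (if (sg a * w) j < 0 then (sg a * w) j else 0)
      = (∑ j ∈ Finset.Icc (1:ℤ) l, (if w j < 0 then w j else 0)) + (-1) := by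
    have key : ∀ j ∈ Finset.Icc (1:ℤ) l,
        (if (sg a * w) j < 0 then (sg a * w) j else 0)
        = (if w j < 0 then w j else 0) + (if j = P then (-1:ℤ) else 0) := by
      intro j hj
      rw [Finset.mem_Icc] at hj
      have e1 := hne_a j hj.1
      have e2 := hne_ma1 j hj.1
      by_cases hjP : j = P
      · subst hjP
        simp only [Equiv.Perm.mul_apply, hwP, sg_eval a ha]
        split_ifs <;> omega
      · have hne : w j ≠ -a := fun h => hjP (hinj (h.trans hwP.symm))
        simp only [Equiv.Perm.mul_apply, sg_eval a ha]
        split_ifs <;> omega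
    rw [Finset.sum_congr rfl key, Finset.sum_add_distrib]
    congr 1
    rw [Finset.sum_ite_eq' (Finset.Icc (1:ℤ) l) P (fun _ => (-1:ℤ)),
      if_pos (Finset.mem_Icc.mpr ⟨hP1, hPl⟩)]
  unfold signedLen
  rw [hcard, hsum]; ring

lemma step_neg1 (l : ℕ) (w : Equiv.Perm ℤ) (hw : ∀ x : ℤ, w (-x) = -w x)
    (P : ℤ) (hP1 : 1 ≤ P) (hPl : P ≤ (l:ℤ)) (hwP : w P = 1) :
    signedLen l (Equiv.swap (1:ℤ) (-1) * w) = signedLen l w + 1 := by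
  have hinj := w.injective
  have hMP : w (-P) = -1 := by rw [hw P, hwP]
  have h0 : w 0 = 0 := by
    have h := hw 0
    rw [neg_zero] at h
    omega
  have hne_m1 : ∀ j : ℤ, 1 ≤ j → w j ≠ -1 := by
    intro j hj hja
    have : j = -P := hinj (hja.trans hMP.symm)
    omega
  have hne_0 : ∀ j : ℤ, 1 ≤ j → w j ≠ 0 := by
    intro j hj hja
    have : j = 0 := hinj (hja.trans h0.symm)
    omega
  have sw1 : ∀ z : ℤ, Equiv.swap (1:ℤ) (-1) z = if z = 1 then -1 else if z = -1 then 1 else z := by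
    intro z
    simp only [Equiv.swap_apply_def]
  have hcard : (Finset.Icc (1:ℤ) l ×ˢ Finset.Icc (1:ℤ) l).filter
      (fun p => p.1 < p.2 ∧ (Equiv.swap (1:ℤ) (-1) * w) p.2 < (Equiv.swap (1:ℤ) (-1) * w) p.1)
      = (Finset.Icc (1:ℤ) l ×ˢ Finset.Icc (1:ℤ) l).filter
        (fun p => p.1 < p.2 ∧ w p.2 < w p.1) := by
    apply Finset.filter_congr
    intro p hp
    rw [Finset.mem_product, Finset.mem_Icc, Finset.mem_Icc] at hp
    obtain ⟨⟨h11, h12⟩, h21, h22⟩ := hp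
    have e1 := hne_m1 p.1 h11; have e2 := hne_m1 p.2 h21
    have e3 := hne_0 p.1 h11; have e4 := hne_0 p.2 h21
    simp only [Equiv.Perm.mul_apply, sw1]
    split_ifs <;> omega
  have hsum : ∑ j ∈ Finset.Icc (1:ℤ) l, (if (Equiv.swap (1:ℤ) (-1) * w) j < 0 then (Equiv.swap (1:ℤ) (-1) * w) j else 0)
      = (∑ j ∈ Finset.Icc (1:ℤ) l, (if w j < 0 then w j else 0)) + (-1) := by
    have key : ∀ j ∈ Finset.Icc (1:ℤ) l,
        (if (Equiv.swap (1:ℤ) (-1) * w) j < 0 then (Equiv.swap (1:ℤ) (-1) * w) j else 0)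
        = (if w j < 0 then w j else 0) + (if j = P then (-1:ℤ) else 0) := by
      intro j hj
      rw [Finset.mem_Icc] at hj
      have e1 := hne_m1 j hj.1
      by_cases hjP : j = P
      · subst hjP
        simp only [Equiv.Perm.mul_apply, hwP, sw1]
        split_ifs <;> omega
      · have hne : w j ≠ 1 := fun h => hjP (hinj (h.trans hwP.symm))
        simp only [Equiv.Perm.mul_apply, sw1]
        split_ifs <;> omega
    rw [Finset.sum_congr rfl key, Finset.sum_add_distrib]
    congr 1
    rw [Finset.sum_ite_eq' (Finset.Icc (1:ℤ) l) P (fun _ => (-1:ℤ)),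
      if_pos (Finset.mem_Icc.mpr ⟨hP1, hPl⟩)]
  unfold signedLen
  rw [hcard, hsum]; ring

lemma step_i (l : ℕ) (w : Equiv.Perm ℤ) (hw : ∀ x : ℤ, w (-x) = -w x) (a : ℤ) (ha : 1 ≤ a)
    (hal : a + 1 ≤ (l:ℤ)) (P Q : ℤ) (hP1 : 1 ≤ P) (hPl : P ≤ (l:ℤ)) (hQ1 : 1 ≤ Q)
    (hQl : Q ≤ (l:ℤ)) (hPQ : P < Q) (hwP : w P = a) (hwQ : w Q = a+1) :
    signedLen l (sg a * w) = signedLen l w + 1 := by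
  have hinj := w.injective
  have hMP : w (-P) = -a := by rw [hw P, hwP]
  have hMQ : w (-Q) = -(a+1) := by rw [hw Q, hwQ]
  have hne_ma : ∀ j : ℤ, 1 ≤ j → w j ≠ -a := by
    intro j hj hja
    have : j = -P := hinj (hja.trans hMP.symm)
    omega
  have hne_ma1 : ∀ j : ℤ, 1 ≤ j → w j ≠ -(a+1) := by
    intro j hj hja
    have : j = -Q := hinj (hja.trans hMQ.symm)
    omega
  have hja : ∀ j : ℤ, w j = a → j = P := fun j h => hinj (h.trans hwP.symm)
  have hja1 : ∀ j : ℤ, w j = a + 1 → j = Q := fun j h => hinj (h.trans hwQ.symm)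
  have hcard : (Finset.Icc (1:ℤ) l ×ˢ Finset.Icc (1:ℤ) l).filter
      (fun p => p.1 < p.2 ∧ (sg a * w) p.2 < (sg a * w) p.1)
      = insert (P, Q) ((Finset.Icc (1:ℤ) l ×ˢ Finset.Icc (1:ℤ) l).filter
        (fun p => p.1 < p.2 ∧ w p.2 < w p.1)) := by
    ext p
    obtain ⟨p1, p2⟩ := p
    simp only [Finset.mem_insert, Finset.mem_filter, Finset.mem_product, Finset.mem_Icc,
      Prod.mk.injEq, Equiv.Perm.mul_apply, sg_eval a ha]
    have e1 : w p1 = a → p1 = P := hja p1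
    have e2 : w p2 = a → p2 = P := hja p2
    have e3 : w p1 = a + 1 → p1 = Q := hja1 p1
    have e4 : w p2 = a + 1 → p2 = Q := hja1 p2
    constructor
    · rintro ⟨⟨⟨h11, h12⟩, h21, h22⟩, hlt, hcond⟩
      have e5 := hne_ma p1 h11; have e6 := hne_ma p2 h21
      have e7 := hne_ma1 p1 h11; have e8 := hne_ma1 p2 h21
      rw [hwP] at *
      split_ifs at hcond <;> omega
    · rintro (⟨rfl, rfl⟩ | ⟨⟨⟨h11, h12⟩, h21, h22⟩, hlt, hcond⟩)
      · refine ⟨⟨⟨hP1, hPl⟩, hQ1, hQl⟩, hPQ, ?_⟩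
        rw [hwP, hwQ]
        split_ifs <;> omega
      · have e5 := hne_ma p1 h11; have e6 := hne_ma p2 h21
        have e7 := hne_ma1 p1 h11; have e8 := hne_ma1 p2 h21
        refine ⟨⟨⟨h11, h12⟩, h21, h22⟩, hlt, ?_⟩
        split_ifs <;> omega
  have hnotmem : (P, Q) ∉ (Finset.Icc (1:ℤ) l ×ˢ Finset.Icc (1:ℤ) l).filter
      (fun p => p.1 < p.2 ∧ w p.2 < w p.1) := by
    intro h
    have := (Finset.mem_filter.mp h).2.2
    rw [hwP, hwQ] at this
    omega
  have hsum : ∑ j ∈ Finset.Icc (1:ℤ) l, (if (sg a * w) j < 0 then (sg a * w) j else 0)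
      = ∑ j ∈ Finset.Icc (1:ℤ) l, (if w j < 0 then w j else 0) := by
    apply Finset.sum_congr rfl
    intro j hj
    rw [Finset.mem_Icc] at hj
    have e1 := hne_ma j hj.1
    have e2 := hne_ma1 j hj.1
    simp only [Equiv.Perm.mul_apply, sg_eval a ha]
    split_ifs <;> omega
  unfold signedLen
  rw [hcard, Finset.card_insert_of_notMem hnotmem, hsum]
  push_cast
  ring




def Descr (l : ℕ) (w : Equiv.Perm ℤ) (f : ℤ → ℤ) : Prop :=
  ∀ p : ℤ, 1 ≤ p → p ≤ (l:ℤ) → w p = f p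

def Stp (l : ℕ) (x y : Equiv.Perm ℤ) : Prop :=
  (signedWeakLt l x y ∨ y = uB l * x) ∧ y ∈ SignedPermSet l

def Reach (l : ℕ) : Equiv.Perm ℤ → Equiv.Perm ℤ → Prop := Relation.ReflTransGen (Stp l)

lemma weak_single (l i : ℕ) (w : Equiv.Perm ℤ) (h1 : 1 ≤ i) (h2 : i ≤ l)
    (hlen : signedLen l (signedGen l i * w) = signedLen l w + 1) :
    signedWeakLt l w (signedGen l i * w) := by
  have hp : signedProd l (fun _ => i) 1 = signedGen l i := by
    simp [signedProd, show List.range' 1 1 = [1] from rfl]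
  refine ⟨1, le_refl 1, fun _ => i, fun m _ _ => ⟨h1, h2⟩, ?_, ?_⟩
  · intro m hm1 hm2
    have hm : m = 1 := le_antisymm hm2 hm1
    subst hm
    rw [hp]
    push_cast
    exact hlen
  · rw [hp]

lemma descr_congr {l : ℕ} {w : Equiv.Perm ℤ} {f f' : ℤ → ℤ} (hd : Descr l w f)
    (h : ∀ p : ℤ, 1 ≤ p → p ≤ (l:ℤ) → f p = f' p) : Descr l w f' :=
  fun p h1 h2 => (hd p h1 h2).trans (h p h1 h2)

lemma chain_generic (l : ℕ) (F : ℕ → ℤ → ℤ) (g : ℕ → Equiv.Perm ℤ) (n : ℕ)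
    (hstep : ∀ k, k < n → ∀ w : Equiv.Perm ℤ, w ∈ SignedPermSet l → Descr l w (F k) →
      Stp l w (g k * w) ∧ Descr l (g k * w) (F (k+1))) :
    ∀ w, w ∈ SignedPermSet l → Descr l w (F 0) →
      ∃ w', Reach l w w' ∧ w' ∈ SignedPermSet l ∧ Descr l w' (F n) := by
  induction n with
  | zero => exact fun w hwS hd => ⟨w, Relation.ReflTransGen.refl, hwS, hd⟩
  | succ n ih =>
    intro w hwS hd
    obtain ⟨w', hr, hS, hd'⟩ := ih (fun k hk => hstep k (by omega)) w hwS hd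
    obtain ⟨hstp, hd''⟩ := hstep n (by omega) w' hS hd'
    exact ⟨g n * w', hr.tail hstp, hstp.2, hd''⟩

lemma advance_iii (l i : ℕ) (hi1 : 1 ≤ i) (hi2 : i ≤ l - 1) (w : Equiv.Perm ℤ)
    (hwS : w ∈ SignedPermSet l) (P Q : ℤ)
    (hP1 : 1 ≤ P) (hPl : P ≤ (l:ℤ)) (hQ1 : 1 ≤ Q) (hQl : Q ≤ (l:ℤ))
    (ha : 1 ≤ (l:ℤ) - i)
    (hwP : w P = -((l:ℤ) - i)) (hwQ : w Q = (l:ℤ) - i + 1) :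
    Stp l w (signedGen l i * w) := by
  have hgen := signedGen_eq_sg l i hi1 hi2
  have hal : ((l:ℤ) - i) + 1 ≤ (l:ℤ) := by omega
  have hlen : signedLen l (signedGen l i * w) = signedLen l w + 1 := by
    rw [hgen]
    exact step_iii l w hwS.1 _ ha hal P Q hP1 hPl hQ1 hQl hwP hwQ
  exact ⟨Or.inl (weak_single l i w hi1 (by omega) hlen),
    mem_mul (signedGen_mem l i hi1 (by omega)) hwS⟩

lemma advance_i (l i : ℕ) (hi1 : 1 ≤ i) (hi2 : i ≤ l - 1) (w : Equiv.Perm ℤ)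
    (hwS : w ∈ SignedPermSet l) (P Q : ℤ)
    (hP1 : 1 ≤ P) (hPl : P ≤ (l:ℤ)) (hQ1 : 1 ≤ Q) (hQl : Q ≤ (l:ℤ)) (hPQ : P < Q)
    (ha : 1 ≤ (l:ℤ) - i)
    (hwP : w P = (l:ℤ) - i) (hwQ : w Q = (l:ℤ) - i + 1) :
    Stp l w (signedGen l i * w) := by
  have hgen := signedGen_eq_sg l i hi1 hi2
  have hal : ((l:ℤ) - i) + 1 ≤ (l:ℤ) := by omega
  have hlen : signedLen l (signedGen l i * w) = signedLen l w + 1 := by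
    rw [hgen]
    exact step_i l w hwS.1 _ ha hal P Q hP1 hPl hQ1 hQl hPQ hwP hwQ
  exact ⟨Or.inl (weak_single l i w hi1 (by omega) hlen),
    mem_mul (signedGen_mem l i hi1 (by omega)) hwS⟩

lemma advance_sl (l : ℕ) (hl : 1 ≤ l) (w : Equiv.Perm ℤ)
    (hwS : w ∈ SignedPermSet l) (P : ℤ)
    (hP1 : 1 ≤ P) (hPl : P ≤ (l:ℤ)) (hwP : w P = 1) :
    Stp l w (signedGen l l * w) := by
  have hlen : signedLen l (signedGen l l * w) = signedLen l w + 1 := by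
    rw [signedGen_last]
    exact step_neg1 l w hwS.1 P hP1 hPl hwP
  exact ⟨Or.inl (weak_single l l w hl (le_refl l) hlen),
    mem_mul (signedGen_mem l l hl (le_refl l)) hwS⟩

lemma descr_after (l i : ℕ) (hi1 : 1 ≤ i) (hi2 : i ≤ l - 1) (w : Equiv.Perm ℤ) (f : ℤ → ℤ)
    (hd : Descr l w f) :
    Descr l (signedGen l i * w) (fun p => sg ((l:ℤ) - i) (f p)) := fun p h1 h2 => by
  rw [signedGen_eq_sg l i hi1 hi2, Equiv.Perm.mul_apply, hd p h1 h2]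

lemma descr_after_sl (l : ℕ) (w : Equiv.Perm ℤ) (f : ℤ → ℤ) (hd : Descr l w f) :
    Descr l (signedGen l l * w) (fun p => Equiv.swap (1:ℤ) (-1) (f p)) := fun p h1 h2 => by
  rw [signedGen_last, Equiv.Perm.mul_apply, hd p h1 h2]

lemma descr_after_uB (l : ℕ) (w : Equiv.Perm ℤ) (f : ℤ → ℤ) (hd : Descr l w f) :
    Descr l (uB l * w) (fun p => uB l (f p)) := fun p h1 h2 => by
  rw [Equiv.Perm.mul_apply, hd p h1 h2]

lemma stp_uB (l : ℕ) (hl : 1 ≤ l) (w : Equiv.Perm ℤ) (hwS : w ∈ SignedPermSet l) :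
    Stp l w (uB l * w) := ⟨Or.inr rfl, mem_mul (uB_mem l hl) hwS⟩

end St10

namespace St10


def fD (l m u : ℕ) : ℤ → ℤ := fun p =>
  if p ≤ (m:ℤ) - 1 then p
  else if p ≤ (l:ℤ) - u then -(p + u)
  else -(p - l + u + m - 1)

def fR (l m t : ℕ) : ℤ → ℤ := fun p =>
  if p ≤ (m:ℤ) - 1 then p
  else if p ≤ (l:ℤ) - t - 1 then -(p + t)
  else if p = (l:ℤ) - t then (l:ℤ)
  else -(p - l + t + m - 1)

def fA (l m t k : ℕ) : ℤ → ℤ := fun p =>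
  if p ≤ (m:ℤ) - 1 then p
  else if p ≤ (l:ℤ) - t - 1 - k then -(p + t)
  else if p ≤ (l:ℤ) - t - 1 then -(p + t + 1)
  else if p = (l:ℤ) - t then (l:ℤ) - k
  else -(p - l + t + m - 1)

def fB (l m t k : ℕ) : ℤ → ℤ := fun p =>
  if p ≤ (m:ℤ) - 1 then p
  else if p ≤ (l:ℤ) - t - 1 then -(p + t + 1)
  else if p = (l:ℤ) - t then (m:ℤ) + t - k
  else if p ≤ (l:ℤ) - k then -(p - l + t + m - 1)
  else -(p - l + t + m)

def fC (l m t k : ℕ) : ℤ → ℤ := fun p =>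
  if p ≤ (m:ℤ) - 1 - k then p
  else if p ≤ (m:ℤ) - 1 then p + 1
  else if p ≤ (l:ℤ) - t - 1 then -(p + t + 1)
  else if p = (l:ℤ) - t then (m:ℤ) - k
  else -(p - l + t + m)

def fE (l m t k : ℕ) : ℤ → ℤ := fun p =>
  if p ≤ (k:ℤ) then p
  else if p ≤ (m:ℤ) - 1 then p + 1
  else if p ≤ (l:ℤ) - t - 1 then -(p + t + 1)
  else if p = (l:ℤ) - t then -((k:ℤ) + 1)
  else -(p - l + t + m)

def fF (l m k : ℕ) : ℤ → ℤ := fun p =>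
  if p ≤ (m:ℤ) - 1 then p
  else if p = (m:ℤ) then (l:ℤ) - k
  else if p ≤ (l:ℤ) - k then -(p - 1)
  else -p

lemma alpha_step (l m t : ℕ) (hm : 1 ≤ m) (hmtl : m + t + 1 ≤ l) :
    ∀ k, k < l - m - t → ∀ w, w ∈ SignedPermSet l → Descr l w (fA l m t k) →
      Stp l w (signedGen l (k+1) * w) ∧ Descr l (signedGen l (k+1) * w) (fA l m t (k+1)) := by
  intro k hk w hwS hd
  have hi2 : k + 1 ≤ l - 1 := by omega
  have hstp : Stp l w (signedGen l (k+1) * w) := by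
    apply advance_iii l (k+1) (by omega) hi2 w hwS ((l:ℤ) - t - 1 - k) ((l:ℤ) - t)
      (by omega) (by omega) (by omega) (by omega) (by omega)
    · rw [hd _ (by omega) (by omega)]
      simp only [fA]
      split_ifs <;> omega
    · rw [hd _ (by omega) (by omega)]
      simp only [fA]
      split_ifs <;> omega
  refine ⟨hstp, descr_congr (descr_after l (k+1) (by omega) hi2 w _ hd) ?_⟩
  intro p h1 h2
  rw [sg_eval ((l:ℤ) - ((k+1 : ℕ) : ℤ)) (by omega)]
  simp only [fA]
  split_ifs <;> omega

lemma beta_step (l m t : ℕ) (hm : 1 ≤ m) (hmtl : m + t + 1 ≤ l) :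
    ∀ k, k < t → ∀ w, w ∈ SignedPermSet l → Descr l w (fB l m t k) →
      Stp l w (signedGen l (l-m-t+k+1) * w) ∧
        Descr l (signedGen l (l-m-t+k+1) * w) (fB l m t (k+1)) := by
  intro k hk w hwS hd
  have hi2 : l-m-t+k+1 ≤ l - 1 := by omega
  have hstp : Stp l w (signedGen l (l-m-t+k+1) * w) := by
    apply advance_iii l (l-m-t+k+1) (by omega) hi2 w hwS ((l:ℤ) - k) ((l:ℤ) - t)
      (by omega) (by omega) (by omega) (by omega) (by omega)
    · rw [hd _ (by omega) (by omega)]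
      simp only [fB]
      split_ifs <;> omega
    · rw [hd _ (by omega) (by omega)]
      simp only [fB]
      split_ifs <;> omega
  refine ⟨hstp, descr_congr (descr_after l (l-m-t+k+1) (by omega) hi2 w _ hd) ?_⟩
  intro p h1 h2
  rw [sg_eval ((l:ℤ) - ((l-m-t+k+1 : ℕ) : ℤ)) (by omega)]
  simp only [fB]
  split_ifs <;> omega

lemma gamma_step (l m t : ℕ) (hm : 1 ≤ m) (hmtl : m + t + 1 ≤ l) :
    ∀ k, k < m - 1 → ∀ w, w ∈ SignedPermSet l → Descr l w (fC l m t k) →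
      Stp l w (signedGen l (l-m+1+k) * w) ∧
        Descr l (signedGen l (l-m+1+k) * w) (fC l m t (k+1)) := by
  intro k hk w hwS hd
  have hi2 : l-m+1+k ≤ l - 1 := by omega
  have hstp : Stp l w (signedGen l (l-m+1+k) * w) := by
    apply advance_i l (l-m+1+k) (by omega) hi2 w hwS ((m:ℤ) - 1 - k) ((l:ℤ) - t)
      (by omega) (by omega) (by omega) (by omega) (by omega) (by omega)
    · rw [hd _ (by omega) (by omega)]
      simp only [fC]
      split_ifs <;> omega
    · rw [hd _ (by omega) (by omega)]
      simp only [fC]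
      split_ifs <;> omega
  refine ⟨hstp, descr_congr (descr_after l (l-m+1+k) (by omega) hi2 w _ hd) ?_⟩
  intro p h1 h2
  rw [sg_eval ((l:ℤ) - ((l-m+1+k : ℕ) : ℤ)) (by omega)]
  simp only [fC]
  split_ifs <;> omega

lemma sl_step (l m t : ℕ) (hm : 1 ≤ m) (hmtl : m + t + 1 ≤ l) :
    ∀ w, w ∈ SignedPermSet l → Descr l w (fC l m t (m-1)) →
      Stp l w (signedGen l l * w) ∧ Descr l (signedGen l l * w) (fE l m t 0) := by
  intro w hwS hd
  have hstp : Stp l w (signedGen l l * w) := by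
    apply advance_sl l (by omega) w hwS ((l:ℤ) - t) (by omega) (by omega)
    rw [hd _ (by omega) (by omega)]
    simp only [fC]
    split_ifs <;> omega
  refine ⟨hstp, descr_congr (descr_after_sl l w _ hd) ?_⟩
  intro p h1 h2
  rw [sw1_eval]
  simp only [fC, fE]
  split_ifs <;> omega

lemma delta_step (l m t : ℕ) (hm : 1 ≤ m) (hmtl : m + t + 1 ≤ l) :
    ∀ k, k < m - 1 → ∀ w, w ∈ SignedPermSet l → Descr l w (fE l m t k) →
      Stp l w (signedGen l (l-1-k) * w) ∧
        Descr l (signedGen l (l-1-k) * w) (fE l m t (k+1)) := by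
  intro k hk w hwS hd
  have hi2 : l-1-k ≤ l - 1 := by omega
  have hstp : Stp l w (signedGen l (l-1-k) * w) := by
    apply advance_iii l (l-1-k) (by omega) hi2 w hwS ((l:ℤ) - t) ((k:ℤ) + 1)
      (by omega) (by omega) (by omega) (by omega) (by omega)
    · rw [hd _ (by omega) (by omega)]
      simp only [fE]
      split_ifs <;> omega
    · rw [hd _ (by omega) (by omega)]
      simp only [fE]
      split_ifs <;> omega
  refine ⟨hstp, descr_congr (descr_after l (l-1-k) (by omega) hi2 w _ hd) ?_⟩
  intro p h1 h2
  rw [sg_eval ((l:ℤ) - ((l-1-k : ℕ) : ℤ)) (by omega)]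
  simp only [fE]
  split_ifs <;> omega

lemma final_step (l m : ℕ) (hm : 1 ≤ m) (hml : m ≤ l) :
    ∀ k, k < l - m → ∀ w, w ∈ SignedPermSet l → Descr l w (fF l m k) →
      Stp l w (signedGen l (k+1) * w) ∧ Descr l (signedGen l (k+1) * w) (fF l m (k+1)) := by
  intro k hk w hwS hd
  have hi2 : k + 1 ≤ l - 1 := by omega
  have hstp : Stp l w (signedGen l (k+1) * w) := by
    apply advance_iii l (k+1) (by omega) hi2 w hwS ((l:ℤ) - k) ((m:ℤ))
      (by omega) (by omega) (by omega) (by omega) (by omega)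
    · rw [hd _ (by omega) (by omega)]
      simp only [fF]
      split_ifs <;> omega
    · rw [hd _ (by omega) (by omega)]
      simp only [fF]
      split_ifs <;> omega
  refine ⟨hstp, descr_congr (descr_after l (k+1) (by omega) hi2 w _ hd) ?_⟩
  intro p h1 h2
  rw [sg_eval ((l:ℤ) - ((k+1 : ℕ) : ℤ)) (by omega)]
  simp only [fF]
  split_ifs <;> omega

lemma u0_stepD (l m u : ℕ) (hm : 1 ≤ m) (hu : m + u ≤ l) :
    ∀ w, w ∈ SignedPermSet l → Descr l w (fD l m u) →
      Stp l w (uB l * w) ∧ Descr l (uB l * w) (fR l m u) := by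
  intro w hwS hd
  refine ⟨stp_uB l (by omega) w hwS, descr_congr (descr_after_uB l w _ hd) ?_⟩
  intro p h1 h2
  rw [uB_eval l (by omega)]
  simp only [fD, fR]
  split_ifs <;> omega


end St10

namespace St10


lemma descr_RA {l m t : ℕ} {w : Equiv.Perm ℤ} (hd : Descr l w (fR l m t)) :
    Descr l w (fA l m t 0) :=
  descr_congr hd (by intro p h1 h2; simp only [fR, fA]; split_ifs <;> omega)

lemma descr_AB {l m t : ℕ} (hm : 1 ≤ m) (hmtl : m + t + 1 ≤ l) {w : Equiv.Perm ℤ}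
    (hd : Descr l w (fA l m t (l-m-t))) : Descr l w (fB l m t 0) :=
  descr_congr hd (by intro p h1 h2; simp only [fA, fB]; split_ifs <;> omega)

lemma descr_BC {l m t : ℕ} (hm : 1 ≤ m) (hmtl : m + t + 1 ≤ l) {w : Equiv.Perm ℤ}
    (hd : Descr l w (fB l m t t)) : Descr l w (fC l m t 0) :=
  descr_congr hd (by intro p h1 h2; simp only [fB, fC]; split_ifs <;> omega)

lemma descr_ED {l m t : ℕ} (hm : 1 ≤ m) (hmtl : m + t + 1 ≤ l) {w : Equiv.Perm ℤ}
    (hd : Descr l w (fE l m t (m-1))) : Descr l w (fD l m (t+1)) :=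
  descr_congr hd (by intro p h1 h2; simp only [fE, fD]; split_ifs <;> omega)

lemma descr_RF {l m : ℕ} (hm : 1 ≤ m) (hml : m ≤ l) {w : Equiv.Perm ℤ}
    (hd : Descr l w (fR l m (l-m))) : Descr l w (fF l m 0) :=
  descr_congr hd (by intro p h1 h2; simp only [fR, fF]; split_ifs <;> omega)

lemma descr_FD {l m : ℕ} (hm : 1 ≤ m) (hml : m ≤ l) {w : Equiv.Perm ℤ}
    (hd : Descr l w (fF l m (l-m))) : Descr l w (fD l (m+1) 0) :=
  descr_congr hd (by intro p h1 h2; simp only [fF, fD]; split_ifs <;> omega)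

lemma inner_word (l m t : ℕ) (hm : 1 ≤ m) (hmtl : m + t + 1 ≤ l) :
    ∀ w, w ∈ SignedPermSet l → Descr l w (fR l m t) →
      ∃ w', Reach l w w' ∧ w' ∈ SignedPermSet l ∧ Descr l w' (fD l m (t+1)) := by
  intro w hwS hd
  obtain ⟨w1, hr1, hS1, hd1⟩ := chain_generic l (fA l m t) (fun k => signedGen l (k+1))
    (l-m-t) (alpha_step l m t hm hmtl) w hwS (descr_RA hd)
  obtain ⟨w2, hr2, hS2, hd2⟩ := chain_generic l (fB l m t)
    (fun k => signedGen l (l-m-t+k+1)) t (beta_step l m t hm hmtl) w1 hS1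
    (descr_AB hm hmtl hd1)
  obtain ⟨w3, hr3, hS3, hd3⟩ := chain_generic l (fC l m t)
    (fun k => signedGen l (l-m+1+k)) (m-1) (gamma_step l m t hm hmtl) w2 hS2
    (descr_BC hm hmtl hd2)
  obtain ⟨hstp4, hd4⟩ := sl_step l m t hm hmtl w3 hS3 hd3
  obtain ⟨w5, hr5, hS5, hd5⟩ := chain_generic l (fE l m t)
    (fun k => signedGen l (l-1-k)) (m-1) (delta_step l m t hm hmtl)
    (signedGen l l * w3) hstp4.2 hd4
  exact ⟨w5, ((((hr1.trans hr2).trans hr3).tail hstp4).trans hr5), hS5,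
    descr_ED hm hmtl hd5⟩

lemma block_loop (l m : ℕ) (hm : 1 ≤ m) (hml : m ≤ l) :
    ∀ t, t ≤ l - m → ∀ w, w ∈ SignedPermSet l → Descr l w (fD l m 0) →
      ∃ w', Reach l w w' ∧ w' ∈ SignedPermSet l ∧ Descr l w' (fR l m t) := by
  intro t
  induction t with
  | zero =>
    intro _ w hwS hd
    obtain ⟨hstp, hd'⟩ := u0_stepD l m 0 hm (by omega) w hwS hd
    exact ⟨uB l * w, Relation.ReflTransGen.single hstp, hstp.2, hd'⟩
  | succ t ih =>
    intro ht w hwS hd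
    obtain ⟨w1, hr1, hS1, hd1⟩ := ih (by omega) w hwS hd
    obtain ⟨w2, hr2, hS2, hd2⟩ := inner_word l m t hm (by omega) w1 hS1 hd1
    obtain ⟨hstp, hd'⟩ := u0_stepD l m (t+1) hm (by omega) w2 hS2 hd2
    exact ⟨uB l * w2, (hr1.trans hr2).tail hstp, hstp.2, hd'⟩

lemma block (l m : ℕ) (hm : 1 ≤ m) (hml : m ≤ l) :
    ∀ w, w ∈ SignedPermSet l → Descr l w (fD l m 0) →
      ∃ w', Reach l w w' ∧ w' ∈ SignedPermSet l ∧ Descr l w' (fD l (m+1) 0) := by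
  intro w hwS hd
  obtain ⟨w1, hr1, hS1, hd1⟩ := block_loop l m hm hml (l-m) (le_refl _) w hwS hd
  obtain ⟨w2, hr2, hS2, hd2⟩ := chain_generic l (fF l m) (fun k => signedGen l (k+1))
    (l-m) (final_step l m hm hml) w1 hS1 (descr_RF hm hml hd1)
  exact ⟨w2, hr1.trans hr2, hS2, descr_FD hm hml hd2⟩

lemma top_loop (l : ℕ) (hl : 1 ≤ l) (w0 : Equiv.Perm ℤ) (hw0 : w0 ∈ SignedPermSet l)
    (hd0 : Descr l w0 (fD l 1 0)) :
    ∀ m, 1 ≤ m → m ≤ l + 1 →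
      ∃ w', Reach l w0 w' ∧ w' ∈ SignedPermSet l ∧ Descr l w' (fD l m 0) := by
  intro m
  induction m with
  | zero => omega
  | succ m ih =>
    intro _ hm2
    rcases Nat.eq_or_lt_of_le (show 1 ≤ m + 1 from by omega) with h | h
    · exact ⟨w0, Relation.ReflTransGen.refl, hw0, h ▸ hd0⟩
    · obtain ⟨w1, hr1, hS1, hd1⟩ := ih (by omega) (by omega)
      obtain ⟨w2, hr2, hS2, hd2⟩ := block l m (by omega) (by omega) w1 hS1 hd1
      exact ⟨w2, hr1.trans hr2, hS2, hd2⟩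


end St10

namespace St10

lemma longest_mem (l : ℕ) : signedLongest l ∈ SignedPermSet l := by
  refine ⟨fun z => ?_, fun z hz => ?_⟩
  · simp only [signedLongest, Function.Involutive.coe_toPerm, abs_neg]
    show (if |-z| ≤ (l:ℤ) then - -z else -z) = -(if |z| ≤ (l:ℤ) then -z else z)
    rw [abs_neg]
    split_ifs <;> omega
  · simp only [signedLongest, Function.Involutive.coe_toPerm]
    show (if |z| ≤ (l:ℤ) then -z else z) = z
    rw [if_neg (by omega)]

lemma longest_descr (l : ℕ) : Descr l (signedLongest l) (fD l 1 0) := by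
  intro p h1 h2
  simp only [signedLongest, Function.Involutive.coe_toPerm, fD]
  show (if |p| ≤ (l:ℤ) then -p else p) = _
  rw [abs_of_nonneg (by omega : (0:ℤ) ≤ p)]
  split_ifs <;> omega

lemma descr_one {l : ℕ} {w : Equiv.Perm ℤ} (hw : w ∈ SignedPermSet l)
    (hd : Descr l w (fD l (l+1) 0)) : w = 1 := by
  have hid : ∀ p : ℤ, 1 ≤ p → p ≤ (l:ℤ) → w p = p := by
    intro p h1 h2
    rw [hd p h1 h2]
    simp only [fD]
    split_ifs <;> omega
  have h0 : w 0 = 0 := by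
    have h := hw.1 0
    rw [neg_zero] at h
    omega
  ext x
  simp only [Equiv.Perm.coe_one, id_eq]
  rcases lt_trichotomy x 0 with hx | hx | hx
  · have h2 := hw.1 (-x)
    rw [neg_neg] at h2
    rcases le_or_gt (-x) (l:ℤ) with h3 | h3
    · have h4 := hid (-x) (by omega) h3
      rw [h4] at h2
      omega
    · have h4 := hw.2 (-x) (by rw [abs_of_nonneg (by omega)]; omega)
      rw [h4] at h2
      omega
  · subst hx; exact h0
  · rcases le_or_gt x (l:ℤ) with h3 | h3
    · exact hid x (by omega) h3
    · exact hw.2 x (by rw [abs_of_nonneg (by omega)]; omega)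

lemma reach_to_seq (l : ℕ) (a b : Equiv.Perm ℤ) (h : Reach l a b) :
    ∃ r : ℕ, ∃ w : ℕ → Equiv.Perm ℤ, w 0 = a ∧ w r = b ∧
      (∀ i, 1 ≤ i → i ≤ r → Stp l (w (i-1)) (w i)) := by
  induction h with
  | refl => exact ⟨0, fun _ => a, rfl, rfl, by omega⟩
  | @tail b c hr hstp ih =>
    obtain ⟨r, w, h0, hb, hstep⟩ := ih
    refine ⟨r+1, fun i => if i ≤ r then w i else c, ?_, ?_, ?_⟩
    · show (if 0 ≤ r then w 0 else c) = a
      rw [if_pos (Nat.zero_le r)]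
      exact h0
    · show (if r+1 ≤ r then w (r+1) else c) = c
      rw [if_neg (by omega)]
    · intro i hi1 hi2
      show Stp l (if i-1 ≤ r then w (i-1) else c) (if i ≤ r then w i else c)
      rcases Nat.lt_or_ge i (r+1) with h | h
      · have hir : i ≤ r := by omega
        have hir' : i - 1 ≤ r := by omega
        rw [if_pos hir, if_pos hir']
        exact hstep i hi1 (by omega)
      · have hieq : i = r+1 := by omega
        subst hieq
        have e1 : r + 1 - 1 = r := rfl
        rw [e1, if_pos (le_refl r), if_neg (show ¬ (r+1 ≤ r) by omega), hb]
        exact hstp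

end St10


open St10


theorem statement_10 (l : ℕ) (hl : 1 ≤ l) :
    ∃ (r : ℕ) (w : ℕ → Equiv.Perm ℤ),
      (∀ i, i ≤ r → w i ∈ SignedPermSet l) ∧
      w 0 = signedLongest l ∧ w r = 1 ∧
      ∀ i, 1 ≤ i → i ≤ r →
        signedWeakLt l (w (i - 1)) (w i) ∨ w i = uB l * w (i - 1) := by
  obtain ⟨w', hr, hS, hd⟩ := top_loop l hl (signedLongest l) (longest_mem l)
    (longest_descr l) (l+1) (by omega) (le_refl _)
  have hw1 : w' = 1 := descr_one hS hd
  subst hw1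
  obtain ⟨r, w, h0, hb, hstep⟩ := reach_to_seq l _ _ hr
  refine ⟨r, w, ?_, h0, hb, ?_⟩
  · intro i hi
    cases i with
    | zero => rw [h0]; exact longest_mem l
    | succ n => exact (hstep (n+1) (by omega) hi).2
  · intro i hi1 hi2
    exact (hstep i hi1 hi2).1
end

section
/- There exists a sequence w_Δ = w_0, w_1, …, w_r = id in the group W of signed permutations such that for every 1 ≤ i ≤ r, either w_{i−1} <_∅ w_i in the weak left order, or w_i = u₁ w_{i−1}. -/
/-!
STATEMENT 11 (type C_l): In the hyperoctahedral group of signed permutations there is a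
sequence from the longest element `w_Δ = [−1, …, −l]` to the identity in which each step
either goes up in the weak left order or is left multiplication by `u₁ = [−l, …, −1]`.
-/

open Equiv

/-- The element `u₁ = [−l, −(l−1), …, −1]` (the nontrivial element of `W_Ω` in type `C_l`). -/
def uC (l : ℕ) : Equiv.Perm ℤ :=
  Function.Involutive.toPerm
    (fun x => if 1 ≤ x ∧ x ≤ (l : ℤ) then x - (l + 1)
      else if -(l : ℤ) ≤ x ∧ x ≤ -1 then x + (l + 1) else x)
    (by intro x; dsimp only; split_ifs <;> omega)

-- ===== auxiliary development =====

-- evaluation lemmas for the generators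

lemma signedGen_top (l : ℕ) : signedGen l l = Equiv.swap 1 (-1) := by simp [signedGen]

lemma signedGen_top_apply (l : ℕ) (z : ℤ) :
    signedGen l l z = if z = 1 then -1 else if z = -1 then 1 else z := by
  rw [signedGen_top, Equiv.swap_apply_def]

lemma signedGen_mid_apply (l i : ℕ) (h1 : 1 ≤ i) (h2 : i ≤ l - 1) (hl : 1 ≤ l) (z : ℤ) :
    signedGen l i z = (if z = (l : ℤ) - i then (l : ℤ) - i + 1
      else if z = (l : ℤ) - i + 1 then (l : ℤ) - i
      else if z = -((l : ℤ) - i) then -((l : ℤ) - i) - 1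
      else if z = -((l : ℤ) - i) - 1 then -((l : ℤ) - i) else z) := by
  have hil : i ≠ l := by omega
  have hA : (1 : ℤ) ≤ (l : ℤ) - i := by
    have : (i : ℤ) ≤ (l : ℤ) - 1 := by exact_mod_cast (by omega : i ≤ l - 1)
    omega
  rw [signedGen, if_neg hil, if_pos ⟨h1, h2⟩]
  rw [Equiv.Perm.mul_apply, Equiv.swap_apply_def, Equiv.swap_apply_def]
  split_ifs <;> omega

section facts
variable {l : ℕ} {w : Equiv.Perm ℤ}

lemma mem_mul {w₁ w₂ : Equiv.Perm ℤ} (h1 : w₁ ∈ SignedPermSet l) (h2 : w₂ ∈ SignedPermSet l) :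
    w₁ * w₂ ∈ SignedPermSet l := by
  refine ⟨fun a => ?_, fun a ha => ?_⟩
  · simp [Equiv.Perm.mul_apply, h2.1 a, h1.1 (w₂ a)]
  · simp [Equiv.Perm.mul_apply, h2.2 a ha, h1.2 a ha]

lemma apply_zero (hw : w ∈ SignedPermSet l) : w 0 = 0 := by
  have := hw.1 0
  simp at this
  omega

lemma ne_zero (hw : w ∈ SignedPermSet l) {j : ℤ} (hj : j ≠ 0) : w j ≠ 0 := by
  intro h
  exact hj (w.injective (h.trans (apply_zero hw).symm))

/-- if `w p = v` then for positive `j ≠ p`, `w j ∉ {v, -v}`. -/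
lemma val_excl (hw : w ∈ SignedPermSet l) {p v j : ℤ} (hp : 1 ≤ p) (hpv : w p = v) (hj : 1 ≤ j)
    (hjp : j ≠ p) : w j ≠ v ∧ w j ≠ -v := by
  constructor
  · intro h; exact hjp (w.injective (h.trans hpv.symm))
  · intro h
    have : w (-p) = -v := by rw [hw.1 p, hpv]
    have : j = -p := w.injective (h.trans this.symm)
    have hp1 : 1 ≤ p ∨ p ≤ -1 ∨ p = 0 := by omega
    omega

end facts

section core
variable (l : ℕ)

/-- core length-step lemma: inversion sets coincide, negative sum drops by one at `p`. -/
lemma len_step_core (w w' : Equiv.Perm ℤ) (p : ℤ) (hp : p ∈ Finset.Icc (1:ℤ) l)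
    (hinv : ∀ i j : ℤ, i ∈ Finset.Icc (1:ℤ) l → j ∈ Finset.Icc (1:ℤ) l → i < j →
      ((w' j < w' i) ↔ (w j < w i)))
    (hneg : ∀ j ∈ Finset.Icc (1:ℤ) l,
      (if w' j < 0 then w' j else 0) = (if w j < 0 then w j else 0) - (if j = p then 1 else 0)) :
    signedLen l w' = signedLen l w + 1 := by
  unfold signedLen
  have hcard : ((Finset.Icc (1 : ℤ) l ×ˢ Finset.Icc (1 : ℤ) l).filter
      (fun q => q.1 < q.2 ∧ w' q.2 < w' q.1)) = ((Finset.Icc (1 : ℤ) l ×ˢ Finset.Icc (1 : ℤ) l).filter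
      (fun q => q.1 < q.2 ∧ w q.2 < w q.1)) := by
    apply Finset.filter_congr
    rintro ⟨i, j⟩ hij
    rw [Finset.mem_product] at hij
    by_cases h : i < j
    · simp only [h, true_and]
      exact hinv i j hij.1 hij.2 h
    · simp [h]
  have hsum : ∑ j ∈ Finset.Icc (1:ℤ) l, (if w' j < 0 then w' j else 0)
      = (∑ j ∈ Finset.Icc (1:ℤ) l, (if w j < 0 then w j else 0)) - 1 := by
    rw [Finset.sum_congr rfl hneg, Finset.sum_sub_distrib]
    congr 1
    rw [Finset.sum_ite_eq' (Finset.Icc (1:ℤ) l) p (fun _ => (1:ℤ)), if_pos hp]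
  rw [hcard, hsum]; ring

/-- core length-step lemma, case where one inversion is created at `(p,q)`. -/
lemma len_step_insert (w w' : Equiv.Perm ℤ) (p q : ℤ) (hp : p ∈ Finset.Icc (1:ℤ) l)
    (hq : q ∈ Finset.Icc (1:ℤ) l) (hpq : p < q)
    (hinv : ∀ i j : ℤ, i ∈ Finset.Icc (1:ℤ) l → j ∈ Finset.Icc (1:ℤ) l → i < j →
      (i, j) ≠ (p, q) → ((w' j < w' i) ↔ (w j < w i)))
    (hold : ¬ (w q < w p)) (hnew : w' q < w' p)
    (hneg : ∀ j ∈ Finset.Icc (1:ℤ) l,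
      (if w' j < 0 then w' j else 0) = (if w j < 0 then w j else 0)
        + (if j = p then 1 else 0) - (if j = q then 1 else 0)) :
    signedLen l w' = signedLen l w + 1 := by
  unfold signedLen
  have hcard : ((Finset.Icc (1 : ℤ) l ×ˢ Finset.Icc (1 : ℤ) l).filter
      (fun q => q.1 < q.2 ∧ w' q.2 < w' q.1)) = insert (p, q)
      ((Finset.Icc (1 : ℤ) l ×ˢ Finset.Icc (1 : ℤ) l).filter
      (fun q => q.1 < q.2 ∧ w q.2 < w q.1)) := by
    ext ⟨i, j⟩
    simp only [Finset.mem_insert, Finset.mem_filter, Finset.mem_product]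
    constructor
    · rintro ⟨⟨hi, hj⟩, hlt, hw'⟩
      by_cases hij : (i, j) = (p, q)
      · exact Or.inl hij
      · exact Or.inr ⟨⟨hi, hj⟩, hlt, (hinv i j hi hj hlt hij).mp hw'⟩
    · rintro (hij | ⟨⟨hi, hj⟩, hlt, hwlt⟩)
      · obtain ⟨h1, h2⟩ := Prod.mk.injEq .. ▸ hij
        subst h1; subst h2
        exact ⟨⟨hp, hq⟩, hpq, hnew⟩
      · by_cases hij : (i, j) = (p, q)
        · obtain ⟨h1, h2⟩ := Prod.mk.injEq .. ▸ hij
          subst h1; subst h2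
          exact absurd hwlt hold
        · exact ⟨⟨hi, hj⟩, hlt, (hinv i j hi hj hlt hij).mpr hwlt⟩
  have hnotmem : (p, q) ∉ ((Finset.Icc (1 : ℤ) l ×ˢ Finset.Icc (1 : ℤ) l).filter
      (fun q => q.1 < q.2 ∧ w q.2 < w q.1)) := by
    rw [Finset.mem_filter]
    rintro ⟨-, -, h⟩
    exact hold h
  have hsum : ∑ j ∈ Finset.Icc (1:ℤ) l, (if w' j < 0 then w' j else 0)
      = ∑ j ∈ Finset.Icc (1:ℤ) l, (if w j < 0 then w j else 0) := by
    rw [Finset.sum_congr rfl hneg, Finset.sum_sub_distrib, Finset.sum_add_distrib,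
      Finset.sum_ite_eq' (Finset.Icc (1:ℤ) l) p (fun _ => (1:ℤ)), if_pos hp,
      Finset.sum_ite_eq' (Finset.Icc (1:ℤ) l) q (fun _ => (1:ℤ)), if_pos hq]
    ring
  rw [hcard, Finset.card_insert_of_notMem hnotmem, hsum]
  push_cast
  ring
end core

section steps
variable {l : ℕ} {w : Equiv.Perm ℤ}

set_option maxHeartbeats 2000000

lemma step_sl (hw : w ∈ SignedPermSet l) (p : ℤ) (hp : p ∈ Finset.Icc (1:ℤ) l)
    (hv : w p = 1) :
    signedLen l (signedGen l l * w) = signedLen l w + 1 := by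
  rw [Finset.mem_Icc] at hp
  have hz : ∀ t : ℤ, 1 ≤ t → w t ≠ 0 := fun t ht => ne_zero hw (by omega)
  have key : ∀ t : ℤ, 1 ≤ t → w t = 1 ∨ (w t ≠ 1 ∧ w t ≠ -1) := by
    intro t ht
    by_cases htp : t = p
    · left; rw [htp, hv]
    · right; exact val_excl hw hp.1 hv ht htp
  apply len_step_core l w _ p (Finset.mem_Icc.mpr hp)
  · intro i j hi hj hij
    rw [Finset.mem_Icc] at hi hj
    have hne : w i ≠ w j := fun h => (by omega : i ≠ j) (w.injective h)
    have hzi := hz i hi.1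
    have hzj := hz j hj.1
    rcases key i hi.1 with h1 | ⟨h1, h1'⟩ <;> rcases key j hj.1 with h2 | ⟨h2, h2'⟩ <;>
      simp only [Equiv.Perm.mul_apply, signedGen_top_apply] <;> split_ifs <;> omega
  · intro j hj
    rw [Finset.mem_Icc] at hj
    by_cases hjp : j = p
    · subst hjp
      simp only [Equiv.Perm.mul_apply, signedGen_top_apply, hv, if_pos rfl]
      norm_num
    · have hzj := hz j hj.1
      obtain ⟨h2, h2'⟩ := val_excl hw hp.1 hv hj.1 hjp
      simp only [Equiv.Perm.mul_apply, signedGen_top_apply]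
      split_ifs <;> omega

lemma step_case4 (i : ℕ) (hi1 : 1 ≤ i) (hi2 : i ≤ l - 1) (hl : 1 ≤ l)
    (hw : w ∈ SignedPermSet l) (p q : ℤ) (hp : p ∈ Finset.Icc (1:ℤ) l)
    (hq : q ∈ Finset.Icc (1:ℤ) l)
    (hvp : w p = -((l:ℤ) - i)) (hvq : w q = (l:ℤ) - i + 1) :
    signedLen l (signedGen l i * w) = signedLen l w + 1 := by
  set A : ℤ := (l:ℤ) - i with hA
  have hA1 : 1 ≤ A := by
    have : (i : ℤ) ≤ (l : ℤ) - 1 := by exact_mod_cast (by omega : i ≤ l - 1)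
    omega
  rw [Finset.mem_Icc] at hp hq
  have hz : ∀ t : ℤ, 1 ≤ t → w t ≠ 0 := fun t ht => ne_zero hw (by omega)
  have key : ∀ t : ℤ, 1 ≤ t → w t = -A ∨ w t = A + 1 ∨
      (w t ≠ A ∧ w t ≠ -A ∧ w t ≠ A+1 ∧ w t ≠ -(A+1)) := by
    intro t ht
    by_cases htp : t = p
    · left; rw [htp, hvp]
    by_cases htq : t = q
    · right; left; rw [htq, hvq]
    have e1 := val_excl hw hp.1 hvp ht htp
    have e2 := val_excl hw hq.1 hvq ht htq
    right; right
    refine ⟨by omega, e1.1, e2.1, by omega⟩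
  have hup : ∀ t : ℤ, 1 ≤ t → t ≠ p → w t ≠ -A := by
    intro t ht htp
    exact (val_excl hw hp.1 hvp ht htp).1
  apply len_step_core l w _ p (Finset.mem_Icc.mpr hp)
  · intro a b ha hb hab
    rw [Finset.mem_Icc] at ha hb
    have hne : w a ≠ w b := fun h => (by omega : a ≠ b) (w.injective h)
    have hza := hz a ha.1
    have hzb := hz b hb.1
    rcases key a ha.1 with h1 | h1 | ⟨h1, h1', h1'', h1'''⟩ <;>
      rcases key b hb.1 with h2 | h2 | ⟨h2, h2', h2'', h2'''⟩ <;>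
      simp only [Equiv.Perm.mul_apply, signedGen_mid_apply l i hi1 hi2 hl, ← hA] <;>
      split_ifs <;> omega
  · intro t ht
    rw [Finset.mem_Icc] at ht
    by_cases htp : t = p
    · subst htp
      simp only [Equiv.Perm.mul_apply, signedGen_mid_apply l i hi1 hi2 hl, ← hA, hvp]
      split_ifs <;> omega
    · have hne := hup t ht.1 htp
      have hzt := hz t ht.1
      rcases key t ht.1 with h1 | h1 | ⟨h1, h1', h1'', h1'''⟩ <;>
        simp only [Equiv.Perm.mul_apply, signedGen_mid_apply l i hi1 hi2 hl, ← hA] <;>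
        split_ifs <;> omega

lemma step_case2 (i : ℕ) (hi1 : 1 ≤ i) (hi2 : i ≤ l - 1) (hl : 1 ≤ l)
    (hw : w ∈ SignedPermSet l) (p q : ℤ) (hp : p ∈ Finset.Icc (1:ℤ) l)
    (hq : q ∈ Finset.Icc (1:ℤ) l) (hpq : p < q)
    (hvp : w p = -((l:ℤ) - i) - 1) (hvq : w q = -((l:ℤ) - i)) :
    signedLen l (signedGen l i * w) = signedLen l w + 1 := by
  set A : ℤ := (l:ℤ) - i with hA
  have hA1 : 1 ≤ A := by
    have : (i : ℤ) ≤ (l : ℤ) - 1 := by exact_mod_cast (by omega : i ≤ l - 1)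
    omega
  rw [Finset.mem_Icc] at hp hq
  have hz : ∀ t : ℤ, 1 ≤ t → w t ≠ 0 := fun t ht => ne_zero hw (by omega)
  have key : ∀ t : ℤ, 1 ≤ t → (w t = -(A+1) ∧ t = p) ∨ (w t = -A ∧ t = q) ∨
      (t ≠ p ∧ t ≠ q ∧ w t ≠ A ∧ w t ≠ -A ∧ w t ≠ A+1 ∧ w t ≠ -(A+1)) := by
    intro t ht
    by_cases htp : t = p
    · left; constructor
      · rw [htp, hvp]; ring
      · exact htp
    by_cases htq : t = q
    · right; left; exact ⟨by rw [htq, hvq], htq⟩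
    have e1 := val_excl hw hp.1 hvp ht htp
    have e2 := val_excl hw hq.1 hvq ht htq
    right; right
    exact ⟨htp, htq, by omega, e2.1, by omega, by omega⟩
  apply len_step_insert l w _ p q (Finset.mem_Icc.mpr hp) (Finset.mem_Icc.mpr hq) hpq
  · intro a b ha hb hab hne'
    rw [Finset.mem_Icc] at ha hb
    have hne : w a ≠ w b := fun h => (by omega : a ≠ b) (w.injective h)
    have hne'' : a ≠ p ∨ b ≠ q := by
      by_contra hcon
      push_neg at hcon
      exact hne' (Prod.ext hcon.1 hcon.2)
    rcases key a ha.1 with ⟨h1, e1⟩ | ⟨h1, e1⟩ | ⟨ha1, ha2, h1, h1', h1'', h1'''⟩ <;>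
      rcases key b hb.1 with ⟨h2, e2⟩ | ⟨h2, e2⟩ | ⟨hb1, hb2, h2, h2', h2'', h2'''⟩ <;>
      simp only [Equiv.Perm.mul_apply, signedGen_mid_apply l i hi1 hi2 hl, ← hA] <;>
      split_ifs <;> omega
  · rw [hvp, hvq]; omega
  · simp only [Equiv.Perm.mul_apply, signedGen_mid_apply l i hi1 hi2 hl, ← hA, hvp, hvq]
    split_ifs <;> omega
  · intro t ht
    rw [Finset.mem_Icc] at ht
    have hzt := hz t ht.1
    rcases key t ht.1 with ⟨h1, rfl⟩ | ⟨h1, rfl⟩ | ⟨ht1, ht2, h1, h1', h1'', h1'''⟩ <;>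
      simp only [Equiv.Perm.mul_apply, signedGen_mid_apply l i hi1 hi2 hl, ← hA] <;>
      split_ifs <;> omega

end steps

section reach
variable (l : ℕ)

lemma uC_apply (z : ℤ) : uC l z = if 1 ≤ z ∧ z ≤ (l : ℤ) then z - (l + 1)
    else if -(l : ℤ) ≤ z ∧ z ≤ -1 then z + (l + 1) else z := rfl

lemma signedLongest_apply (z : ℤ) :
    signedLongest l z = if |z| ≤ (l : ℤ) then -z else z := rfl

lemma uC_mem : uC l ∈ SignedPermSet l := by
  constructor
  · intro a
    rw [uC_apply, uC_apply]
    split_ifs <;> omega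
  · intro a ha
    rcases le_or_gt 0 a with h | h
    · rw [abs_of_nonneg h] at ha
      rw [uC_apply]
      split_ifs <;> omega
    · rw [abs_of_neg h] at ha
      rw [uC_apply]
      split_ifs <;> omega

lemma signedLongest_mem : signedLongest l ∈ SignedPermSet l := by
  constructor
  · intro a
    rw [signedLongest_apply, signedLongest_apply, abs_neg]
    split_ifs <;> omega
  · intro a ha
    rw [signedLongest_apply, if_neg (by omega)]

lemma signedGen_mem (i : ℕ) (hi1 : 1 ≤ i) (hi2 : i ≤ l) : signedGen l i ∈ SignedPermSet l := by
  by_cases hil : i = l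
  · subst hil
    constructor
    · intro a
      rw [signedGen_top_apply, signedGen_top_apply]
      split_ifs <;> omega
    · intro a ha
      have hl1 : (1:ℤ) ≤ (i:ℤ) := by exact_mod_cast hi1
      rcases le_or_gt 0 a with h | h
      · rw [abs_of_nonneg h] at ha
        rw [signedGen_top_apply]
        split_ifs <;> omega
      · rw [abs_of_neg h] at ha
        rw [signedGen_top_apply]
        split_ifs <;> omega
  · have hi2' : i ≤ l - 1 := by omega
    have hl : 1 ≤ l := by omega
    have hA : (1:ℤ) ≤ (l:ℤ) - i ∧ (i:ℤ) ≥ 1 ∧ (i:ℤ) ≤ (l:ℤ) - 1 := by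
      constructor
      · have : (i : ℤ) ≤ (l : ℤ) - 1 := by exact_mod_cast (by omega : i ≤ l - 1)
        omega
      · constructor
        · exact_mod_cast hi1
        · exact_mod_cast (by omega : i ≤ l - 1)
    constructor
    · intro a
      rw [signedGen_mid_apply l i hi1 hi2' hl, signedGen_mid_apply l i hi1 hi2' hl]
      split_ifs <;> omega
    · intro a ha
      rcases le_or_gt 0 a with h | h
      · rw [abs_of_nonneg h] at ha
        rw [signedGen_mid_apply l i hi1 hi2' hl]
        split_ifs <;> omega
      · rw [abs_of_neg h] at ha
        rw [signedGen_mid_apply l i hi1 hi2' hl]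
        split_ifs <;> omega

/-- reachability by steps which go up in weak order or are left multiplication by `uC`. -/
def Reach (x y : Equiv.Perm ℤ) : Prop :=
  ∃ (r : ℕ) (w : ℕ → Equiv.Perm ℤ),
    (∀ i, i ≤ r → w i ∈ SignedPermSet l) ∧
    w 0 = x ∧ w r = y ∧
    ∀ i, 1 ≤ i → i ≤ r →
      signedWeakLt l (w (i - 1)) (w i) ∨ w i = uC l * w (i - 1)

lemma Reach.refl (x : Equiv.Perm ℤ) (hx : x ∈ SignedPermSet l) : Reach l x x :=
  ⟨0, fun _ => x, fun _ _ => hx, rfl, rfl, fun i h1 h2 => by omega⟩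

lemma Reach.trans {x y z : Equiv.Perm ℤ} (h1 : Reach l x y) (h2 : Reach l y z) :
    Reach l x z := by
  obtain ⟨r1, w1, hm1, h01, hr1, hs1⟩ := h1
  obtain ⟨r2, w2, hm2, h02, hr2, hs2⟩ := h2
  refine ⟨r1 + r2, fun i => if i ≤ r1 then w1 i else w2 (i - r1), ?_, ?_, ?_, ?_⟩
  · intro i hi
    by_cases h : i ≤ r1
    · simpa [h] using hm1 i h
    · simp only [if_neg h]
      exact hm2 (i - r1) (by omega)
  · simpa using h01
  · by_cases h : r2 = 0
    · subst h
      simp only [Nat.add_zero, if_pos le_rfl, hr1]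
      rw [← h02, hr2]
    · simp only [if_neg (by omega : ¬ r1 + r2 ≤ r1)]
      rw [show r1 + r2 - r1 = r2 by omega, hr2]
  · intro i hi1 hi2
    by_cases h : i ≤ r1
    · simp only [if_pos h, if_pos (by omega : i - 1 ≤ r1)]
      exact hs1 i hi1 h
    · by_cases h' : i = r1 + 1
      · subst h'
        have e1 : r1 + 1 - 1 = r1 := by omega
        have e2 : r1 + 1 - r1 = 1 := by omega
        simp only [e1, e2, if_neg h, if_pos (le_refl r1), hr1, ← h02]
        exact hs2 1 le_rfl (by omega)
      · simp only [if_neg h, if_neg (by omega : ¬ i - 1 ≤ r1)]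
        rw [show i - 1 - r1 = (i - r1) - 1 by omega]
        exact hs2 (i - r1) (by omega) (by omega)

lemma signedProd_one (js : ℕ → ℕ) : signedProd l js 1 = signedGen l (js 1) := by
  simp [signedProd, List.range']

lemma Reach.ustep (x : Equiv.Perm ℤ) (hx : x ∈ SignedPermSet l) :
    Reach l x (uC l * x) := by
  refine ⟨1, fun i => if i = 0 then x else uC l * x, ?_, by simp, by simp, ?_⟩
  · intro i hi
    by_cases h : i = 0 <;> simp [h, hx, mem_mul (uC_mem l) hx]
  · intro i hi1 hi2
    have : i = 1 := by omega
    subst this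
    right
    simp

lemma Reach.genstep (x : Equiv.Perm ℤ) (hx : x ∈ SignedPermSet l) (j : ℕ)
    (hj1 : 1 ≤ j) (hj2 : j ≤ l)
    (hlen : signedLen l (signedGen l j * x) = signedLen l x + 1) :
    Reach l x (signedGen l j * x) := by
  refine ⟨1, fun i => if i = 0 then x else signedGen l j * x, ?_, by simp, by simp, ?_⟩
  · intro i hi
    by_cases h : i = 0 <;> simp [h, hx, mem_mul (signedGen_mem l j hj1 hj2) hx]
  · intro i hi1 hi2
    have : i = 1 := by omega
    subst this
    left
    refine ⟨1, le_rfl, fun _ => j, fun m h1 h2 => ⟨hj1, hj2⟩, ?_, by simp [signedProd_one]⟩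
    intro m h1 h2
    have : m = 1 := by omega
    subst this
    rw [signedProd_one]
    simpa using hlen

end reach

section funs

/-- window formula for intermediate states in the first climb. -/
def Bp (l k m a j : ℤ) : ℤ :=
  if j ≤ k+1 then (if m-k-1+j ≤ a+1 then m-k-2+j else m-k-1+j)
  else if j ≤ m-1 then (if m-a ≤ j then m-j else m+1-j)
  else if j = m ∧ m ≤ l then -(a+1)
  else if j ≤ l then -j
  else j

/-- window formula for intermediate states in the second climb. -/
def Dp (l k m a j : ℤ) : ℤ :=
  if j ≤ k+1 then (if m-a ≤ j then j-m else j-(m+1))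
  else if j ≤ m-1 then (if m-a ≤ j then m-j else m+1-j)
  else if j = m ∧ m ≤ l then -(a+1)
  else if j ≤ l then -j
  else j

/-- window formula for the checkpoints `g_k`. -/
def Gp (l k j : ℤ) : ℤ := if j ≤ k+1 then j-(k+2) else if j ≤ l then -j else j

/-- extend a window formula on positive integers to a signed function. -/
def mir (f : ℤ → ℤ) : ℤ → ℤ := fun z => if 0 < z then f z else if z < 0 then -(f (-z)) else 0

lemma mir_step {s : Equiv.Perm ℤ} (hs : ∀ y : ℤ, s (-y) = - s y) (f g : ℤ → ℤ)
    (h : ∀ z, 1 ≤ z → s (f z) = g z) : ∀ z, s (mir f z) = mir g z := by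
  intro z
  unfold mir
  have h0 : s 0 = 0 := by have := hs 0; simp at this; omega
  split_ifs with h1 h2
  · exact h z (by omega)
  · rw [hs, h (-z) (by omega)]
  · exact h0

variable (l : ℕ)

-- value lemmas
lemma V2 (k m : ℤ) (hk : 0 ≤ k) (h1 : k+2 ≤ m) (h2 : m ≤ l) : mir (Bp l k (m+1) m) m = 1 := by
  unfold mir Bp; split_ifs <;> omega

lemma V3a (k m b : ℤ) (hk : 0 ≤ k) (h1 : k+2 ≤ m) (h2 : m ≤ l) (hb : 0 ≤ b) (hb2 : b ≤ m-2) :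
    mir (Bp l k m b) m = -(b+1) := by
  unfold mir Bp; split_ifs <;> omega

lemma V3b (k m b : ℤ) (hk : 0 ≤ k) (h1 : k+2 ≤ m) (h2 : m ≤ l) (hb : 0 ≤ b) (hb2 : b ≤ m-k-3) :
    mir (Bp l k m b) (m-b-1) = b+2 := by
  unfold mir Bp; split_ifs <;> omega

lemma V3c (k m b : ℤ) (hk : 0 ≤ k) (h1 : k+2 ≤ m) (h2 : m ≤ l) (hb : m-k-2 ≤ b) (hb2 : b ≤ m-2) :
    mir (Bp l k m b) (b+3+k-m) = b+2 := by
  unfold mir Bp; split_ifs <;> omega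

lemma V5 (k m : ℤ) (hk : 0 ≤ k) (h1 : k+3 ≤ m) (h2 : m ≤ l) : mir (Dp l k (m+1) m) m = 1 := by
  unfold mir Dp; split_ifs <;> omega

lemma V6a (k m b : ℤ) (hk : 0 ≤ k) (h1 : k+3 ≤ m) (h2 : m ≤ l) (hb : 0 ≤ b) (hb2 : b ≤ m-2) :
    mir (Dp l k m b) m = -(b+1) := by
  unfold mir Dp; split_ifs <;> omega

lemma V6b (k m b : ℤ) (hk : 0 ≤ k) (h1 : k+3 ≤ m) (h2 : m ≤ l) (hb : 0 ≤ b) (hb2 : b ≤ m-k-3) :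
    mir (Dp l k m b) (m-b-1) = b+2 := by
  unfold mir Dp; split_ifs <;> omega

lemma V6c (k m b : ℤ) (hk : 0 ≤ k) (h1 : k+3 ≤ m) (h2 : m ≤ l) (hb : m-k-2 ≤ b) (hb2 : b ≤ m-2) :
    mir (Dp l k m b) (m-b-1) = -(b+2) := by
  unfold mir Dp; split_ifs <;> omega

lemma V7 (k : ℤ) (hk : 0 ≤ k) (h2 : k+2 ≤ l) : mir (Dp l k (k+3) (k+2)) (k+2) = 1 := by
  unfold mir Dp; split_ifs <;> omega

-- transition lemmas on positive entries
lemma T1p (k : ℤ) (hk : 0 ≤ k) (hk2 : k ≤ (l:ℤ)-2) :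
    ∀ z : ℤ, 1 ≤ z → uC l (Gp l k z) = Bp l k ((l:ℤ)+1) l z := by
  intro z hz
  rw [uC_apply]
  unfold Gp Bp
  split_ifs <;> omega

lemma T2p (k m : ℤ) (hk : 0 ≤ k) (h1 : k+2 ≤ m) (h2 : m ≤ l) :
    ∀ z : ℤ, 1 ≤ z → signedGen l l (Bp l k (m+1) m z) = Bp l k m 0 z := by
  intro z hz
  rw [signedGen_top_apply]
  unfold Bp
  split_ifs <;> omega

lemma T3p (k m b : ℤ) (hk : 0 ≤ k) (h1 : k+2 ≤ m) (h2 : m ≤ l) (hb : 0 ≤ b) (hb2 : b ≤ m-2)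
    (i : ℕ) (hi1 : 1 ≤ i) (hi2 : i ≤ l - 1) (hl : 1 ≤ l) (hiA : (l:ℤ) - (i:ℤ) = b + 1) :
    ∀ z : ℤ, 1 ≤ z → signedGen l i (Bp l k m b z) = Bp l k m (b+1) z := by
  intro z hz
  rw [signedGen_mid_apply l i hi1 hi2 hl, hiA]
  unfold Bp
  split_ifs <;> omega

lemma T4p (k : ℤ) (hk : 0 ≤ k) (hk2 : k ≤ (l:ℤ)-2) :
    ∀ z : ℤ, 1 ≤ z → uC l (Bp l k (k+2) (k+1) z) = Dp l k ((l:ℤ)+1) l z := by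
  intro z hz
  rw [uC_apply]
  unfold Bp Dp
  split_ifs <;> omega

lemma T5p (k m : ℤ) (hk : 0 ≤ k) (h1 : k+3 ≤ m) (h2 : m ≤ l) :
    ∀ z : ℤ, 1 ≤ z → signedGen l l (Dp l k (m+1) m z) = Dp l k m 0 z := by
  intro z hz
  rw [signedGen_top_apply]
  unfold Dp
  split_ifs <;> omega

lemma T6p (k m b : ℤ) (hk : 0 ≤ k) (h1 : k+3 ≤ m) (h2 : m ≤ l) (hb : 0 ≤ b) (hb2 : b ≤ m-2)
    (i : ℕ) (hi1 : 1 ≤ i) (hi2 : i ≤ l - 1) (hl : 1 ≤ l) (hiA : (l:ℤ) - (i:ℤ) = b + 1) :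
    ∀ z : ℤ, 1 ≤ z → signedGen l i (Dp l k m b z) = Dp l k m (b+1) z := by
  intro z hz
  rw [signedGen_mid_apply l i hi1 hi2 hl, hiA]
  unfold Dp
  split_ifs <;> omega

lemma T7p (k : ℤ) (hk : 0 ≤ k) (hk2 : k+2 ≤ (l:ℤ)) :
    ∀ z : ℤ, 1 ≤ z → signedGen l l (Dp l k (k+3) (k+2) z) = Gp l (k+1) z := by
  intro z hz
  rw [signedGen_top_apply]
  unfold Dp Gp
  split_ifs <;> omega

lemma T8p (hl : 1 ≤ l) :
    ∀ z : ℤ, 1 ≤ z → uC l (Gp l ((l:ℤ)-1) z) = z := by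
  intro z hz
  rw [uC_apply]
  unfold Gp
  split_ifs <;> omega

lemma T0 (hl : 1 ≤ l) : ⇑(signedLongest l) = mir (Gp l 0) := by
  have hl' : (1:ℤ) ≤ (l:ℤ) := by exact_mod_cast hl
  funext z
  rw [signedLongest_apply]
  unfold mir Gp
  rcases le_or_gt 0 z with h | h
  · rw [abs_of_nonneg h]
    split_ifs <;> omega
  · rw [abs_of_neg h]
    split_ifs <;> omega

end funs

section main
variable (l : ℕ)

lemma blockB (k m : ℤ) (hk : 0 ≤ k) (hm1 : k+2 ≤ m) (hm2 : m ≤ (l:ℤ)) :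
    ∀ x : Equiv.Perm ℤ, x ∈ SignedPermSet l → ⇑x = mir (Bp l k (m+1) m) →
    ∃ y, y ∈ SignedPermSet l ∧ Reach l x y ∧ ⇑y = mir (Bp l k m (m-1)) := by
  intro x hx hfx
  have hl : 1 ≤ l := by
    have : (1:ℤ) ≤ (l:ℤ) := by omega
    exact_mod_cast this
  have hmem_sl := signedGen_mem l l hl le_rfl
  have hlen0 : signedLen l (signedGen l l * x) = signedLen l x + 1 := by
    apply step_sl hx m (Finset.mem_Icc.mpr ⟨by omega, hm2⟩)
    rw [hfx]
    exact V2 l k m hk hm1 hm2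
  have hfx0 : ⇑(signedGen l l * x) = mir (Bp l k m 0) := by
    funext z
    rw [Equiv.Perm.mul_apply, hfx]
    exact mir_step hmem_sl.1 _ _ (T2p l k m hk hm1 hm2) z
  have inner : ∀ b : ℕ, (b:ℤ) ≤ m - 1 →
      ∃ y, y ∈ SignedPermSet l ∧ Reach l x y ∧ ⇑y = mir (Bp l k m (b:ℤ)) := by
    intro b
    induction b with
    | zero =>
      intro _
      refine ⟨signedGen l l * x, mem_mul hmem_sl hx,
        Reach.genstep l x hx l hl le_rfl hlen0, ?_⟩
      rw [hfx0]
      norm_num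
    | succ b ih =>
      intro hb
      have hb' : (b:ℤ) ≤ m - 2 := by push_cast at hb; omega
      obtain ⟨y, hy, hry, hfy⟩ := ih (by omega)
      set i : ℕ := l - 1 - b with hi
      have hi1 : 1 ≤ i := by omega
      have hi2 : i ≤ l - 1 := by omega
      have hiA : (l:ℤ) - (i:ℤ) = (b:ℤ) + 1 := by omega
      have hmemi := signedGen_mem l i hi1 (by omega)
      have hvp : y m = -((l:ℤ) - (i:ℤ)) := by
        rw [hfy, hiA]
        exact V3a l k m b hk hm1 hm2 (by omega) hb'
      have hlen : signedLen l (signedGen l i * y) = signedLen l y + 1 := by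
        by_cases hcase : (b:ℤ) ≤ m - k - 3
        · apply step_case4 i hi1 hi2 hl hy m (m-(b:ℤ)-1)
            (Finset.mem_Icc.mpr ⟨by omega, hm2⟩) (Finset.mem_Icc.mpr ⟨by omega, by omega⟩)
            hvp ?_
          rw [hfy, hiA]
          have := V3b l k m b hk hm1 hm2 (by omega) hcase
          omega
        · apply step_case4 i hi1 hi2 hl hy m ((b:ℤ)+3+k-m)
            (Finset.mem_Icc.mpr ⟨by omega, hm2⟩) (Finset.mem_Icc.mpr ⟨by omega, by omega⟩)
            hvp ?_
          rw [hfy, hiA]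
          have := V3c l k m b hk hm1 hm2 (by omega) hb'
          omega
      have hfy' : ⇑(signedGen l i * y) = mir (Bp l k m ((b:ℤ)+1)) := by
        funext z
        rw [Equiv.Perm.mul_apply, hfy]
        exact mir_step hmemi.1 _ _
          (T3p l k m b hk hm1 hm2 (by omega) hb' i hi1 hi2 hl hiA) z
      refine ⟨signedGen l i * y, mem_mul hmemi hy,
        Reach.trans l hry (Reach.genstep l y hy i hi1 (by omega) hlen), ?_⟩
      rw [hfy']
      norm_num
  obtain ⟨y, hy, hry, hfy⟩ := inner (m-1).toNat (by omega)
  refine ⟨y, hy, hry, ?_⟩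
  rw [hfy, show (((m-1).toNat : ℤ)) = m-1 by omega]

lemma blockD (k m : ℤ) (hk : 0 ≤ k) (hm1 : k+3 ≤ m) (hm2 : m ≤ (l:ℤ)) :
    ∀ x : Equiv.Perm ℤ, x ∈ SignedPermSet l → ⇑x = mir (Dp l k (m+1) m) →
    ∃ y, y ∈ SignedPermSet l ∧ Reach l x y ∧ ⇑y = mir (Dp l k m (m-1)) := by
  intro x hx hfx
  have hl : 1 ≤ l := by
    have : (1:ℤ) ≤ (l:ℤ) := by omega
    exact_mod_cast this
  have hmem_sl := signedGen_mem l l hl le_rfl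
  have hlen0 : signedLen l (signedGen l l * x) = signedLen l x + 1 := by
    apply step_sl hx m (Finset.mem_Icc.mpr ⟨by omega, hm2⟩)
    rw [hfx]
    exact V5 l k m hk hm1 hm2
  have hfx0 : ⇑(signedGen l l * x) = mir (Dp l k m 0) := by
    funext z
    rw [Equiv.Perm.mul_apply, hfx]
    exact mir_step hmem_sl.1 _ _ (T5p l k m hk hm1 hm2) z
  have inner : ∀ b : ℕ, (b:ℤ) ≤ m - 1 →
      ∃ y, y ∈ SignedPermSet l ∧ Reach l x y ∧ ⇑y = mir (Dp l k m (b:ℤ)) := by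
    intro b
    induction b with
    | zero =>
      intro _
      refine ⟨signedGen l l * x, mem_mul hmem_sl hx,
        Reach.genstep l x hx l hl le_rfl hlen0, ?_⟩
      rw [hfx0]
      norm_num
    | succ b ih =>
      intro hb
      have hb' : (b:ℤ) ≤ m - 2 := by push_cast at hb; omega
      obtain ⟨y, hy, hry, hfy⟩ := ih (by omega)
      set i : ℕ := l - 1 - b with hi
      have hi1 : 1 ≤ i := by omega
      have hi2 : i ≤ l - 1 := by omega
      have hiA : (l:ℤ) - (i:ℤ) = (b:ℤ) + 1 := by omega
      have hmemi := signedGen_mem l i hi1 (by omega)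
      have hvq : y m = -((l:ℤ) - (i:ℤ)) := by
        rw [hfy, hiA]
        exact V6a l k m b hk hm1 hm2 (by omega) hb'
      have hlen : signedLen l (signedGen l i * y) = signedLen l y + 1 := by
        by_cases hcase : (b:ℤ) ≤ m - k - 3
        · apply step_case4 i hi1 hi2 hl hy m (m-(b:ℤ)-1)
            (Finset.mem_Icc.mpr ⟨by omega, hm2⟩) (Finset.mem_Icc.mpr ⟨by omega, by omega⟩)
            hvq ?_
          rw [hfy, hiA]
          have := V6b l k m b hk hm1 hm2 (by omega) hcase
          omega
        · apply step_case2 i hi1 hi2 hl hy (m-(b:ℤ)-1) m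
            (Finset.mem_Icc.mpr ⟨by omega, by omega⟩) (Finset.mem_Icc.mpr ⟨by omega, hm2⟩)
            (by omega) ?_ hvq
          rw [hfy, hiA]
          have := V6c l k m b hk hm1 hm2 (by omega) hb'
          omega
      have hfy' : ⇑(signedGen l i * y) = mir (Dp l k m ((b:ℤ)+1)) := by
        funext z
        rw [Equiv.Perm.mul_apply, hfy]
        exact mir_step hmemi.1 _ _
          (T6p l k m b hk hm1 hm2 (by omega) hb' i hi1 hi2 hl hiA) z
      refine ⟨signedGen l i * y, mem_mul hmemi hy,
        Reach.trans l hry (Reach.genstep l y hy i hi1 (by omega) hlen), ?_⟩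
      rw [hfy']
      norm_num
  obtain ⟨y, hy, hry, hfy⟩ := inner (m-1).toNat (by omega)
  refine ⟨y, hy, hry, ?_⟩
  rw [hfy, show (((m-1).toNat : ℤ)) = m-1 by omega]

lemma climbB (k : ℤ) (hk : 0 ≤ k) :
    ∀ t : ℕ, ∀ m : ℤ, m = k+1+t → m ≤ (l:ℤ) →
    ∀ x, x ∈ SignedPermSet l → ⇑x = mir (Bp l k (m+1) m) →
    ∃ y, y ∈ SignedPermSet l ∧ Reach l x y ∧ ⇑y = mir (Bp l k (k+2) (k+1)) := by
  intro t
  induction t with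
  | zero =>
    intro m hm hml x hx hfx
    refine ⟨x, hx, Reach.refl l x hx, ?_⟩
    rw [hfx, show m = k+1 by omega, show k+1+1 = k+2 by ring]
  | succ t ih =>
    intro m hm hml x hx hfx
    obtain ⟨y, hy, hry, hfy⟩ := blockB l k m hk (by push_cast at hm; omega) hml x hx hfx
    have hfy' : ⇑y = mir (Bp l k ((m-1)+1) (m-1)) := by
      rw [hfy, show m-1+1 = m by ring]
    obtain ⟨z, hz, hrz, hfz⟩ := ih (m-1) (by push_cast at hm ⊢; omega) (by omega) y hy hfy'
    exact ⟨z, hz, Reach.trans l hry hrz, hfz⟩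

lemma climbD (k : ℤ) (hk : 0 ≤ k) :
    ∀ t : ℕ, ∀ m : ℤ, m = k+2+t → m ≤ (l:ℤ) →
    ∀ x, x ∈ SignedPermSet l → ⇑x = mir (Dp l k (m+1) m) →
    ∃ y, y ∈ SignedPermSet l ∧ Reach l x y ∧ ⇑y = mir (Dp l k (k+3) (k+2)) := by
  intro t
  induction t with
  | zero =>
    intro m hm hml x hx hfx
    refine ⟨x, hx, Reach.refl l x hx, ?_⟩
    rw [hfx, show m = k+2 by omega, show k+2+1 = k+3 by ring]
  | succ t ih =>
    intro m hm hml x hx hfx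
    obtain ⟨y, hy, hry, hfy⟩ := blockD l k m hk (by push_cast at hm; omega) hml x hx hfx
    have hfy' : ⇑y = mir (Dp l k ((m-1)+1) (m-1)) := by
      rw [hfy, show m-1+1 = m by ring]
    obtain ⟨z, hz, hrz, hfz⟩ := ih (m-1) (by push_cast at hm ⊢; omega) (by omega) y hy hfy'
    exact ⟨z, hz, Reach.trans l hry hrz, hfz⟩

lemma seg (k : ℤ) (hk : 0 ≤ k) (hk2 : k ≤ (l:ℤ)-2) :
    ∀ x, x ∈ SignedPermSet l → ⇑x = mir (Gp l k) →
    ∃ y, y ∈ SignedPermSet l ∧ Reach l x y ∧ ⇑y = mir (Gp l (k+1)) := by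
  intro x hx hfx
  have hl : 1 ≤ l := by
    have : (1:ℤ) ≤ (l:ℤ) := by omega
    exact_mod_cast this
  -- first u-step
  have hm1 : uC l * x ∈ SignedPermSet l := mem_mul (uC_mem l) hx
  have hx1 : ⇑(uC l * x) = mir (Bp l k ((l:ℤ)+1) (l:ℤ)) := by
    funext z
    rw [Equiv.Perm.mul_apply, hfx]
    exact mir_step (uC_mem l).1 _ _ (T1p l k hk hk2) z
  have hr1 : Reach l x (uC l * x) := Reach.ustep l x hx
  -- first climb
  obtain ⟨y2, hy2, hry2, hfy2⟩ := climbB l k hk ((l:ℤ)-1-k).toNat (l:ℤ) (by omega) le_rfl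
    (uC l * x) hm1 hx1
  -- second u-step
  have hm3 : uC l * y2 ∈ SignedPermSet l := mem_mul (uC_mem l) hy2
  have hx3 : ⇑(uC l * y2) = mir (Dp l k ((l:ℤ)+1) (l:ℤ)) := by
    funext z
    rw [Equiv.Perm.mul_apply, hfy2]
    exact mir_step (uC_mem l).1 _ _ (T4p l k hk hk2) z
  have hr3 : Reach l y2 (uC l * y2) := Reach.ustep l y2 hy2
  -- second climb
  obtain ⟨y4, hy4, hry4, hfy4⟩ := climbD l k hk ((l:ℤ)-2-k).toNat (l:ℤ) (by omega) le_rfl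
    (uC l * y2) hm3 hx3
  -- final generator step
  have hmem_sl := signedGen_mem l l hl le_rfl
  have hlen5 : signedLen l (signedGen l l * y4) = signedLen l y4 + 1 := by
    apply step_sl hy4 (k+2) (Finset.mem_Icc.mpr ⟨by omega, by omega⟩)
    rw [hfy4]
    exact V7 l k hk (by omega)
  have hf5 : ⇑(signedGen l l * y4) = mir (Gp l (k+1)) := by
    funext z
    rw [Equiv.Perm.mul_apply, hfy4]
    exact mir_step hmem_sl.1 _ _ (T7p l k hk (by omega)) z
  refine ⟨signedGen l l * y4, mem_mul hmem_sl hy4, ?_, hf5⟩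
  exact Reach.trans l (Reach.trans l (Reach.trans l hr1 hry2)
    (Reach.trans l hr3 hry4)) (Reach.genstep l y4 hy4 l hl le_rfl hlen5)

lemma master (hl : 1 ≤ l) : ∀ n : ℕ, (n:ℤ) ≤ (l:ℤ)-1 →
    ∃ y, y ∈ SignedPermSet l ∧ Reach l (signedLongest l) y ∧ ⇑y = mir (Gp l (n:ℤ)) := by
  intro n
  induction n with
  | zero =>
    intro _
    refine ⟨signedLongest l, signedLongest_mem l, Reach.refl l _ (signedLongest_mem l), ?_⟩
    rw [T0 l hl]
    norm_num
  | succ n ih =>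
    intro hn
    have hn' : (n:ℤ) ≤ (l:ℤ)-2 := by push_cast at hn; omega
    obtain ⟨y, hy, hry, hfy⟩ := ih (by omega)
    obtain ⟨z, hz, hrz, hfz⟩ := seg l (n:ℤ) (by omega) hn' y hy hfy
    refine ⟨z, hz, Reach.trans l hry hrz, ?_⟩
    rw [hfz]
    norm_num

lemma reach_final (hl : 1 ≤ l) : Reach l (signedLongest l) 1 := by
  obtain ⟨y, hy, hry, hfy⟩ := master l hl (l-1) (by omega)
  have hfy' : ⇑y = mir (Gp l ((l:ℤ)-1)) := by
    rw [hfy, show (((l-1 : ℕ)):ℤ) = (l:ℤ)-1 by omega]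
  have hfz : ⇑(uC l * y) = mir (fun z => z) := by
    funext z
    rw [Equiv.Perm.mul_apply, hfy']
    exact mir_step (uC_mem l).1 _ _ (T8p l hl) z
  have hz1 : uC l * y = 1 := by
    apply Equiv.ext
    intro z
    rw [Equiv.Perm.one_apply, congrFun hfz z]
    simp only [mir]
    split_ifs <;> omega
  have := Reach.trans l hry (Reach.ustep l y hy)
  rwa [hz1] at this

end main


theorem statement_11 (l : ℕ) (hl : 1 ≤ l) :
    ∃ (r : ℕ) (w : ℕ → Equiv.Perm ℤ),
      (∀ i, i ≤ r → w i ∈ SignedPermSet l) ∧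
      w 0 = signedLongest l ∧ w r = 1 ∧
      ∀ i, 1 ≤ i → i ≤ r →
        signedWeakLt l (w (i - 1)) (w i) ∨ w i = uC l * w (i - 1) := by
  obtain ⟨r, w, h1, h2, h3, h4⟩ := reach_final l hl
  exact ⟨r, w, h1, h2, h3, h4⟩
end
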